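/- arXiv:2502.19851 — 8 statements merged into one kernel-verified Lean document; each statement's English description precedes it below -/
import Mathlib

section
/- For any measurable forecast f: 𝒳 → [0,1] and any joint distribution of (X,Y) with Y ∈ [0,1], the Distance from Calibration satisfies Δ_dCE(f) ≤ 3·√(Δ_Cutoff(f)); equivalently, Δ_dCE(f)²/9 ≤ Δ_Cutoff(f). -/
open MeasureTheory Set

/-- Cutoff Calibration Error: supremum over intervals `I ⊆ [0,1]` of
`|E[(Y − f(X))·1{f(X) ∈ I}]|`. -/
noncomputable def cutoffCE {Ω 𝒳 : Type*} [MeasurableSpace Ω] [MeasurableSpace 𝒳]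
    (μ : Measure Ω) (X : Ω → 𝒳) (Y : Ω → ℝ) (f : 𝒳 → ℝ) : ℝ :=
  ⨆ I : {I : Set ℝ // I ⊆ Icc 0 1 ∧ I.OrdConnected},
    |∫ ω, (Y ω - f (X ω)) * I.1.indicator (1 : ℝ → ℝ) (f (X ω)) ∂μ|

/-- Distance from Calibration: infimum of `E[|g(X) − f(X)|]` over measurable
`g : 𝒳 → [0,1]` that are perfectly calibrated, i.e. `E[Y | g(X)] = g(X)` a.s. -/
noncomputable def dCE {Ω 𝒳 : Type*} [MeasurableSpace Ω] [MeasurableSpace 𝒳]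
    (μ : Measure Ω) (X : Ω → 𝒳) (Y : Ω → ℝ) (f : 𝒳 → ℝ) : ℝ :=
  sInf {r : ℝ | ∃ g : 𝒳 → ℝ, Measurable g ∧ (∀ x, g x ∈ Icc (0:ℝ) 1) ∧
    (μ[Y | MeasurableSpace.comap (fun ω => g (X ω)) inferInstance]
      =ᵐ[μ] fun ω => g (X ω)) ∧
    r = ∫ ω, |g (X ω) - f (X ω)| ∂μ}

namespace CutoffAux

/-- Bin index: which of the `N` bins of width `1/N` does `t` belong to. -/
noncomputable def binIdx (N : ℕ) (t : ℝ) : ℕ := min ⌊(N : ℝ) * t⌋₊ (N - 1)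

lemma binIdx_mono (N : ℕ) : Monotone (binIdx N) := fun _ _ hab =>
  min_le_min (Nat.floor_mono (mul_le_mul_of_nonneg_left hab (Nat.cast_nonneg N))) le_rfl

lemma binIdx_measurable (N : ℕ) : Measurable (binIdx N) :=
  (Nat.measurable_floor.comp (measurable_const_mul _)).min measurable_const

lemma binIdx_lt {N : ℕ} (hN : 0 < N) (t : ℝ) : binIdx N t < N :=
  lt_of_le_of_lt (min_le_right _ _) (Nat.sub_lt hN one_pos)

lemma binIdx_mem_Icc {N : ℕ} (hN : 0 < N) {t : ℝ} (ht : t ∈ Icc (0:ℝ) 1) {i : ℕ}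
    (h : binIdx N t = i) : t ∈ Icc ((i : ℝ)/N) (((i : ℝ)+1)/N) := by
  have h' : min ⌊(N : ℝ) * t⌋₊ (N - 1) = i := h
  have hN' : (0:ℝ) < N := by exact_mod_cast hN
  have hNt : 0 ≤ (N:ℝ) * t := mul_nonneg hN'.le ht.1
  constructor
  · rw [div_le_iff₀ hN']
    have h1 : i ≤ ⌊(N:ℝ) * t⌋₊ := h' ▸ min_le_left _ _
    have h2 : (⌊(N:ℝ) * t⌋₊ : ℝ) ≤ (N:ℝ) * t := Nat.floor_le hNt
    have h3 : (i:ℝ) ≤ (⌊(N:ℝ) * t⌋₊ : ℝ) := by exact_mod_cast h1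
    linarith
  · rw [le_div_iff₀ hN']
    by_cases hc : ⌊(N:ℝ) * t⌋₊ ≤ N - 1
    · have hi : ⌊(N:ℝ) * t⌋₊ = i := by rw [← h', min_eq_left hc]
      have h2 : (N:ℝ) * t < (⌊(N:ℝ) * t⌋₊ : ℝ) + 1 := Nat.lt_floor_add_one _
      rw [hi] at h2
      linarith
    · push_neg at hc
      have hi : i = N - 1 := by rw [← h', min_eq_right hc.le]
      have hcast : ((i:ℝ) + 1) = (N:ℝ) := by
        rw [hi]
        have hsp : (N - 1 : ℕ) + 1 = N := Nat.succ_pred_eq_of_pos hN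
        exact_mod_cast congrArg (Nat.cast (R := ℝ)) hsp
      rw [hcast]
      have := ht.2
      nlinarith

/-- If on `s`, `h` takes values in an interval of length `w`, then the integral of `|h|`
is bounded by `|∫ h| + w * μ s`. -/
lemma abs_setIntegral_le {Ω : Type*} [MeasurableSpace Ω] {μ : Measure Ω} [IsFiniteMeasure μ]
    {s : Set Ω} (hs : MeasurableSet s) {h : Ω → ℝ} (hint : IntegrableOn h s μ)
    {a w : ℝ} (hw : 0 ≤ w) (hbd : ∀ ω ∈ s, h ω ∈ Icc a (a + w)) :
    ∫ ω in s, |h ω| ∂μ ≤ |∫ ω in s, h ω ∂μ| + w * (μ s).toReal := by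
  have hμ : (0:ℝ) ≤ (μ s).toReal := ENNReal.toReal_nonneg
  rcases le_or_gt 0 a with ha | ha
  · have e : ∫ ω in s, |h ω| ∂μ = ∫ ω in s, h ω ∂μ :=
      setIntegral_congr_fun hs fun ω hω => abs_of_nonneg (ha.trans (hbd ω hω).1)
    rw [e]
    have := le_abs_self (∫ ω in s, h ω ∂μ)
    nlinarith
  rcases le_or_gt (a + w) 0 with haw | haw
  · have e : ∫ ω in s, |h ω| ∂μ = ∫ ω in s, (-h ω) ∂μ :=
      setIntegral_congr_fun hs fun ω hω => abs_of_nonpos ((hbd ω hω).2.trans haw)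
    rw [e, integral_neg]
    have := neg_le_abs (∫ ω in s, h ω ∂μ)
    nlinarith
  · have hb : ∫ ω in s, |h ω| ∂μ ≤ ∫ _ω in s, w ∂μ := by
      refine setIntegral_mono_on hint.abs
        (integrableOn_const (measure_ne_top μ s)) hs ?_
      intro ω hω
      rcases hbd ω hω with ⟨h1, h2⟩
      rw [abs_le]
      constructor <;> nlinarith
    rw [setIntegral_const, smul_eq_mul, measureReal_def] at hb
    have := abs_nonneg (∫ ω in s, h ω ∂μ)
    nlinarith

end CutoffAux

open CutoffAux in
/-- Main quantitative lemma: binning into `N` bins gives `dCE ≤ N·Δ_cutoff + 1/N`. -/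
lemma dce_le_bin {Ω 𝒳 : Type*} [MeasurableSpace Ω] [MeasurableSpace 𝒳]
    (μ : Measure Ω) [IsProbabilityMeasure μ]
    (X : Ω → 𝒳) (Y : Ω → ℝ) (f : 𝒳 → ℝ)
    (hX : Measurable X) (hY : Measurable Y) (hf : Measurable f)
    (hY01 : ∀ ω, Y ω ∈ Icc (0:ℝ) 1) (hf01 : ∀ x, f x ∈ Icc (0:ℝ) 1)
    (N : ℕ) (hN : 0 < N) :
    dCE μ X Y f ≤ N * cutoffCE μ X Y f + 1/N := by
  classical
  have hN' : (0:ℝ) < N := by exact_mod_cast hN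
  -- bins
  set A : ℕ → Set Ω := fun i => {ω | binIdx N (f (X ω)) = i} with hAdef
  have hb : Measurable fun ω => binIdx N (f (X ω)) :=
    (binIdx_measurable N).comp' (hf.comp' hX)
  have hA : ∀ i, MeasurableSet (A i) := fun i => hb (measurableSet_singleton i)
  have hAdisj : Pairwise (Function.onFun Disjoint A) := by
    intro i j hij
    refine Set.disjoint_left.2 fun ω h1 h2 => hij ?_
    exact h1.symm.trans h2
  have hcover : (⋃ i ∈ Finset.range N, A i) = Set.univ := by
    ext ω
    simp only [Set.mem_iUnion, Finset.mem_range, Set.mem_univ, iff_true]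
    exact ⟨binIdx N (f (X ω)), binIdx_lt hN _, rfl⟩
  -- integrability of bounded measurable functions
  have hbdd_int : ∀ (h : Ω → ℝ), Measurable h → (∀ ω, |h ω| ≤ 1) → Integrable h μ := by
    intro h hm hb1
    refine (integrable_const (1:ℝ)).mono' hm.aestronglyMeasurable ?_
    filter_upwards with ω
    rw [Real.norm_eq_abs]; exact hb1 ω
  have hYint : Integrable Y μ :=
    hbdd_int Y hY fun ω => abs_le.2 ⟨by linarith [(hY01 ω).1], (hY01 ω).2⟩
  have hfXint : Integrable (fun ω => f (X ω)) μ :=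
    hbdd_int _ (hf.comp' hX) fun ω => abs_le.2 ⟨by linarith [(hf01 (X ω)).1], (hf01 (X ω)).2⟩
  -- calibrated function g
  set c : ℕ → ℝ := fun i => (∫ ω in A i, Y ω ∂μ) / (μ (A i)).toReal with hcdef
  set g : 𝒳 → ℝ := fun x => c (binIdx N (f x)) with hgdef
  have hg : Measurable g := by
    rw [hgdef]
    exact measurable_from_top.comp' ((binIdx_measurable N).comp' hf)
  have hgA : ∀ i, ∀ ω ∈ A i, g (X ω) = c i := by
    intro i ω hω
    simp only [hgdef]
    rw [show binIdx N (f (X ω)) = i from hω]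
  have hc01 : ∀ i, c i ∈ Icc (0:ℝ) 1 := by
    intro i
    by_cases h0 : μ (A i) = 0
    · simp [hcdef, h0]
    · have hpos : 0 < (μ (A i)).toReal := ENNReal.toReal_pos h0 (measure_ne_top μ _)
      have h1 : 0 ≤ ∫ ω in A i, Y ω ∂μ := setIntegral_nonneg (hA i) fun ω _ => (hY01 ω).1
      have h2 : ∫ ω in A i, Y ω ∂μ ≤ (μ (A i)).toReal := by
        have := setIntegral_mono_on hYint.integrableOn
          (integrableOn_const (measure_ne_top μ _)) (hA i)
          (fun ω _ => (hY01 ω).2)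
        exact (by simpa [smul_eq_mul] using this : ∫ ω in A i, Y ω ∂μ ≤ μ.real (A i))
      exact ⟨div_nonneg h1 hpos.le, (div_le_one hpos).2 h2⟩
  have hg01 : ∀ x, g x ∈ Icc (0:ℝ) 1 := fun x => hc01 _
  have hgX : Measurable fun ω => g (X ω) := hg.comp' hX
  have hgXint : Integrable (fun ω => g (X ω)) μ :=
    hbdd_int _ hgX fun ω =>
      abs_le.2 ⟨by linarith [(hg01 (X ω)).1], (hg01 (X ω)).2⟩
  -- per-bin integral identity
  have hconst : ∀ i, ∫ ω in A i, g (X ω) ∂μ = c i * (μ (A i)).toReal := by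
    intro i
    rw [setIntegral_congr_fun (hA i) (fun ω hω => hgA i ω hω), setIntegral_const,
      smul_eq_mul, measureReal_def, mul_comm]
  have hbinInt : ∀ i, ∫ ω in A i, g (X ω) ∂μ = ∫ ω in A i, Y ω ∂μ := by
    intro i
    rw [hconst i]
    by_cases h0 : μ (A i) = 0
    · simp [hcdef, h0, Measure.restrict_eq_zero.2 h0]
    · have hne : (μ (A i)).toReal ≠ 0 :=
        (ENNReal.toReal_pos h0 (measure_ne_top μ _)).ne'
      rw [hcdef]
      field_simp
  -- calibration
  have hm : MeasurableSpace.comap (fun ω => g (X ω)) inferInstance ≤ ‹MeasurableSpace Ω› :=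
    hgX.comap_le
  have hcal : (fun ω => g (X ω))
      =ᵐ[μ] μ[Y | MeasurableSpace.comap (fun ω => g (X ω)) inferInstance] := by
    refine ae_eq_condExp_of_forall_setIntegral_eq hm hYint
      (fun s _ _ => hgXint.integrableOn) ?_ ?_
    · intro s hsm _
      rw [MeasurableSpace.measurableSet_comap] at hsm
      obtain ⟨t, ht, rfl⟩ := hsm
      have hs_eq : (fun ω => g (X ω)) ⁻¹' t
          = ⋃ i ∈ (Finset.range N).filter (fun i => c i ∈ t), A i := by
        ext ω
        simp only [Set.mem_preimage, Set.mem_iUnion, Finset.mem_filter, Finset.mem_range,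
          exists_prop]
        constructor
        · intro hgt
          exact ⟨binIdx N (f (X ω)), ⟨binIdx_lt hN _, hgt⟩, rfl⟩
        · rintro ⟨i, ⟨-, hct⟩, hωi⟩
          rw [hgA i ω hωi]
          exact hct
      rw [hs_eq,
        integral_biUnion_finset _ (fun i _ => hA i)
          (hAdisj.set_pairwise _) (fun i _ => hgXint.integrableOn),
        integral_biUnion_finset _ (fun i _ => hA i)
          (hAdisj.set_pairwise _) (fun i _ => hYint.integrableOn)]
      exact Finset.sum_congr rfl fun i _ => hbinInt i
    · have hmeas : Measurable[MeasurableSpace.comap (fun ω => g (X ω)) inferInstance]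
          fun ω => g (X ω) := Measurable.of_comap_le le_rfl
      exact StronglyMeasurable.aestronglyMeasurable hmeas.stronglyMeasurable
  -- dCE is at most the distance to g
  have hdce_le : dCE μ X Y f ≤ ∫ ω, |g (X ω) - f (X ω)| ∂μ := by
    apply csInf_le
    · refine ⟨0, fun x hx => ?_⟩
      obtain ⟨g', _, _, _, hx⟩ := hx
      rw [hx]
      exact integral_nonneg fun ω => abs_nonneg _
    · exact ⟨g, hg, hg01, hcal.symm, rfl⟩
  -- bound the distance to g
  have habs_int : Integrable (fun ω => |g (X ω) - f (X ω)|) μ := by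
    refine hbdd_int _ ((hgX.sub (hf.comp' hX)).abs) fun ω => ?_
    rw [abs_abs, abs_le]
    constructor <;>
      [linarith [(hg01 (X ω)).1, (hf01 (X ω)).2]; linarith [(hg01 (X ω)).2, (hf01 (X ω)).1]]
  have hbdd : BddAbove (Set.range fun I : {I : Set ℝ // I ⊆ Icc 0 1 ∧ I.OrdConnected} =>
      |∫ ω, (Y ω - f (X ω)) * I.1.indicator (1 : ℝ → ℝ) (f (X ω)) ∂μ|) := by
    refine ⟨1, ?_⟩
    rintro x ⟨I, rfl⟩
    have h := norm_integral_le_of_norm_le_const (μ := μ) (C := 1)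
      (f := fun ω => (Y ω - f (X ω)) * I.1.indicator (1 : ℝ → ℝ) (f (X ω))) ?_
    · simpa [Real.norm_eq_abs, measure_univ] using h
    · filter_upwards with ω
      rw [Real.norm_eq_abs, abs_mul]
      have h1 : |Y ω - f (X ω)| ≤ 1 := by
        rw [abs_le]
        constructor <;>
          [linarith [(hY01 ω).1, (hf01 (X ω)).2]; linarith [(hY01 ω).2, (hf01 (X ω)).1]]
      have h2 : |I.1.indicator (1:ℝ→ℝ) (f (X ω))| ≤ 1 := by
        by_cases hh : f (X ω) ∈ I.1 <;>
          simp [Set.indicator_of_mem, Set.indicator_of_notMem, hh]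
      calc |Y ω - f (X ω)| * |I.1.indicator (1:ℝ→ℝ) (f (X ω))| ≤ 1 * 1 :=
            mul_le_mul h1 h2 (abs_nonneg _) zero_le_one
        _ = 1 := one_mul 1
  -- each bin deviation is at most Δ
  have hd_le : ∀ i ∈ Finset.range N,
      |∫ ω in A i, (Y ω - f (X ω)) ∂μ| ≤ cutoffCE μ X Y f := by
    intro i _
    set J : Set ℝ := Icc 0 1 ∩ {t | binIdx N t = i} with hJdef
    have hJsub : J ⊆ Icc 0 1 := Set.inter_subset_left
    have hJord : J.OrdConnected := by
      constructor
      rintro x ⟨hx01, hxi⟩ z ⟨hz01, hzi⟩ y hy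
      have hy01 : y ∈ Icc (0:ℝ) 1 := ⟨le_trans hx01.1 hy.1, le_trans hy.2 hz01.2⟩
      refine ⟨hy01, le_antisymm ?_ ?_⟩
      · exact hzi ▸ binIdx_mono N hy.2
      · exact hxi ▸ binIdx_mono N hy.1
    have hind : ∀ ω, (Y ω - f (X ω)) * J.indicator (1:ℝ→ℝ) (f (X ω))
        = (A i).indicator (fun ω => Y ω - f (X ω)) ω := by
      intro ω
      by_cases hω : ω ∈ A i
      · have hJm : f (X ω) ∈ J := ⟨hf01 _, hω⟩
        rw [Set.indicator_of_mem hJm, Set.indicator_of_mem hω]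
        simp
      · have hJm : f (X ω) ∉ J := fun hmem => hω hmem.2
        rw [Set.indicator_of_notMem hJm, Set.indicator_of_notMem hω, mul_zero]
    have heq : ∫ ω, (Y ω - f (X ω)) * J.indicator (1:ℝ→ℝ) (f (X ω)) ∂μ
        = ∫ ω in A i, (Y ω - f (X ω)) ∂μ := by
      simp_rw [hind]
      exact integral_indicator (hA i)
    rw [← heq]
    exact le_ciSup hbdd ⟨J, hJsub, hJord⟩
  -- per-bin distance bound
  have hbin_bd : ∀ i ∈ Finset.range N, ∫ ω in A i, |g (X ω) - f (X ω)| ∂μ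
      ≤ |∫ ω in A i, (Y ω - f (X ω)) ∂μ| + (1/N) * (μ (A i)).toReal := by
    intro i _
    have e1 : ∫ ω in A i, |g (X ω) - f (X ω)| ∂μ = ∫ ω in A i, |c i - f (X ω)| ∂μ :=
      setIntegral_congr_fun (hA i) fun ω hω => by rw [hgA i ω hω]
    have hcint : Integrable (fun ω => c i - f (X ω)) μ :=
      (integrable_const (c i)).sub hfXint
    have e2 : ∫ ω in A i, (c i - f (X ω)) ∂μ = ∫ ω in A i, (Y ω - f (X ω)) ∂μ := by
      rw [integral_sub (integrable_const (c i)).integrableOn hfXint.integrableOn,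
        integral_sub hYint.integrableOn hfXint.integrableOn,
        setIntegral_const, smul_eq_mul, measureReal_def, mul_comm, ← hconst i, hbinInt i]
    have hmem : ∀ ω ∈ A i, (c i - f (X ω)) ∈
        Icc (c i - ((i:ℝ)+1)/N) ((c i - ((i:ℝ)+1)/N) + 1/N) := by
      intro ω hω
      have hf2 := binIdx_mem_Icc hN (hf01 (X ω)) (show binIdx N (f (X ω)) = i from hω)
      have hsplit : ((i:ℝ)+1)/N = (i:ℝ)/N + 1/N := by field_simp
      exact ⟨by linarith [hf2.2], by linarith [hf2.1, hsplit.ge]⟩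
    calc ∫ ω in A i, |g (X ω) - f (X ω)| ∂μ = ∫ ω in A i, |c i - f (X ω)| ∂μ := e1
      _ ≤ |∫ ω in A i, (c i - f (X ω)) ∂μ| + (1/N) * (μ (A i)).toReal :=
          abs_setIntegral_le (hA i) hcint.integrableOn (by positivity) hmem
      _ = |∫ ω in A i, (Y ω - f (X ω)) ∂μ| + (1/N) * (μ (A i)).toReal := by rw [e2]
  -- total measure
  have hμsum : ∑ i ∈ Finset.range N, (μ (A i)).toReal = 1 := by
    have hb1 := measure_biUnion_finset (μ := μ) (s := Finset.range N) (f := A)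
      (hAdisj.set_pairwise _) (fun i _ => hA i)
    rw [hcover] at hb1
    calc ∑ i ∈ Finset.range N, (μ (A i)).toReal
        = (∑ i ∈ Finset.range N, μ (A i)).toReal :=
          (ENNReal.toReal_sum fun i _ => measure_ne_top μ _).symm
      _ = (μ Set.univ).toReal := by rw [← hb1]
      _ = 1 := by simp
  -- assemble
  have hsplit : ∫ ω, |g (X ω) - f (X ω)| ∂μ
      = ∑ i ∈ Finset.range N, ∫ ω in A i, |g (X ω) - f (X ω)| ∂μ := by
    rw [← setIntegral_univ, ← hcover,
      integral_biUnion_finset _ (fun i _ => hA i) (hAdisj.set_pairwise _)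
        (fun i _ => habs_int.integrableOn)]
  calc dCE μ X Y f ≤ ∫ ω, |g (X ω) - f (X ω)| ∂μ := hdce_le
    _ = ∑ i ∈ Finset.range N, ∫ ω in A i, |g (X ω) - f (X ω)| ∂μ := hsplit
    _ ≤ ∑ i ∈ Finset.range N,
        (|∫ ω in A i, (Y ω - f (X ω)) ∂μ| + (1/N) * (μ (A i)).toReal) :=
        Finset.sum_le_sum hbin_bd
    _ = (∑ i ∈ Finset.range N, |∫ ω in A i, (Y ω - f (X ω)) ∂μ|)
        + (1/N) * ∑ i ∈ Finset.range N, (μ (A i)).toReal := by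
        rw [Finset.sum_add_distrib, ← Finset.mul_sum]
    _ ≤ N * cutoffCE μ X Y f + 1/N := by
        have hA1 := Finset.sum_le_sum hd_le
        rw [Finset.sum_const, Finset.card_range, nsmul_eq_mul] at hA1
        rw [hμsum, mul_one]
        exact add_le_add hA1 le_rfl

/-- For any measurable forecast `f : 𝒳 → [0,1]` and joint distribution of `(X,Y)` with
`Y ∈ [0,1]`, `Δ_dCE(f)²/9 ≤ Δ_Cutoff(f)` (equivalently `Δ_dCE(f) ≤ 3·√(Δ_Cutoff(f))`). -/
theorem dce_sq_div_nine_le_cutoff {Ω 𝒳 : Type*} [MeasurableSpace Ω] [MeasurableSpace 𝒳]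
    (μ : Measure Ω) [IsProbabilityMeasure μ]
    (X : Ω → 𝒳) (Y : Ω → ℝ) (f : 𝒳 → ℝ)
    (hX : Measurable X) (hY : Measurable Y) (hf : Measurable f)
    (hY01 : ∀ ω, Y ω ∈ Icc (0:ℝ) 1) (hf01 : ∀ x, f x ∈ Icc (0:ℝ) 1) :
    dCE μ X Y f ^ 2 / 9 ≤ cutoffCE μ X Y f := by
  have hbound : ∀ I : {I : Set ℝ // I ⊆ Icc 0 1 ∧ I.OrdConnected},
      |∫ ω, (Y ω - f (X ω)) * I.1.indicator (1 : ℝ → ℝ) (f (X ω)) ∂μ| ≤ 1 := by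
    intro I
    have h := norm_integral_le_of_norm_le_const (μ := μ) (C := 1)
      (f := fun ω => (Y ω - f (X ω)) * I.1.indicator (1 : ℝ → ℝ) (f (X ω))) ?_
    · simpa [Real.norm_eq_abs, measure_univ] using h
    · filter_upwards with ω
      rw [Real.norm_eq_abs, abs_mul]
      have h1 : |Y ω - f (X ω)| ≤ 1 := by
        rw [abs_le]
        constructor <;>
          [linarith [(hY01 ω).1, (hf01 (X ω)).2]; linarith [(hY01 ω).2, (hf01 (X ω)).1]]
      have h2 : |I.1.indicator (1:ℝ→ℝ) (f (X ω))| ≤ 1 := by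
        by_cases hh : f (X ω) ∈ I.1 <;>
          simp [Set.indicator_of_mem, Set.indicator_of_notMem, hh]
      calc |Y ω - f (X ω)| * |I.1.indicator (1:ℝ→ℝ) (f (X ω))| ≤ 1 * 1 :=
            mul_le_mul h1 h2 (abs_nonneg _) zero_le_one
        _ = 1 := one_mul 1
  have hbddA : BddAbove (Set.range fun I : {I : Set ℝ // I ⊆ Icc 0 1 ∧ I.OrdConnected} =>
      |∫ ω, (Y ω - f (X ω)) * I.1.indicator (1 : ℝ → ℝ) (f (X ω)) ∂μ|) := by
    refine ⟨1, ?_⟩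
    rintro x ⟨I, rfl⟩
    exact hbound I
  haveI : Nonempty {I : Set ℝ // I ⊆ Icc 0 1 ∧ I.OrdConnected} :=
    ⟨⟨∅, Set.empty_subset _, Set.ordConnected_empty⟩⟩
  have hΔ0 : 0 ≤ cutoffCE μ X Y f :=
    le_trans (abs_nonneg _)
      (le_ciSup hbddA ⟨∅, Set.empty_subset _, Set.ordConnected_empty⟩)
  have hΔ1 : cutoffCE μ X Y f ≤ 1 := ciSup_le hbound
  have hkey := dce_le_bin μ X Y f hX hY hf hY01 hf01
  have hd0 : 0 ≤ dCE μ X Y f := by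
    apply Real.sInf_nonneg
    rintro x ⟨g', _, _, _, hx⟩
    rw [hx]
    exact integral_nonneg fun ω => abs_nonneg _
  rcases eq_or_lt_of_le hΔ0 with h0 | hpos
  · -- cutoff = 0 : show dCE = 0
    have hdle : dCE μ X Y f ≤ 0 := by
      by_contra hcon
      push_neg at hcon
      obtain ⟨M, hM⟩ := exists_nat_gt (1 / dCE μ X Y f)
      have hM0 : 0 < M := by
        rcases Nat.eq_zero_or_pos M with hz | hp
        · exfalso
          rw [hz] at hM
          have : (0:ℝ) < 1 / dCE μ X Y f := by positivity
          simp at hM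
          linarith
        · exact hp
      have hkM := hkey M hM0
      rw [← h0] at hkM
      have hM' : (0:ℝ) < M := by exact_mod_cast hM0
      have hc : (1:ℝ)/M < dCE μ X Y f := by
        rw [div_lt_iff₀ hM']
        rw [div_lt_iff₀ hcon] at hM
        linarith
      simp only [mul_zero, zero_add] at hkM
      linarith
    have hdeq : dCE μ X Y f = 0 := le_antisymm hdle hd0
    rw [hdeq, ← h0]
    norm_num
  · -- 0 < cutoff
    set s := Real.sqrt (cutoffCE μ X Y f) with hs
    have hs0 : 0 < s := Real.sqrt_pos.2 hpos
    have hss : s * s = cutoffCE μ X Y f := Real.mul_self_sqrt hΔ0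
    have hs1 : s ≤ 1 := Real.sqrt_le_one.2 hΔ1
    set M := ⌈1/s⌉₊ with hMdef
    have hM0 : 0 < M := Nat.ceil_pos.2 (by positivity)
    have hM' : (0:ℝ) < M := by exact_mod_cast hM0
    have h1 : (M:ℝ) ≤ 1/s + 1 := (Nat.ceil_lt_add_one (by positivity)).le
    have h2 : 1/s ≤ (M:ℝ) := Nat.le_ceil _
    have hkM := hkey M hM0
    have hq : (1/s) * (cutoffCE μ X Y f) = s := by
      rw [← hss]
      field_simp
    have hNΔ : (M:ℝ) * cutoffCE μ X Y f ≤ s + cutoffCE μ X Y f := by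
      nlinarith [mul_le_mul_of_nonneg_right h1 hΔ0]
    have hinv : 1/(M:ℝ) ≤ s := by
      rw [div_le_iff₀ hM']
      have : (1/s) * s ≤ (M:ℝ) * s := mul_le_mul_of_nonneg_right h2 hs0.le
      rw [div_mul_cancel₀ 1 hs0.ne'] at this
      linarith
    have hΔs : cutoffCE μ X Y f ≤ s := by nlinarith
    have hdce3 : dCE μ X Y f ≤ 3 * s := by linarith
    have hsq : dCE μ X Y f ^ 2 ≤ (3*s)^2 := by nlinarith
    have h9 : (3*s)^2 = 9 * cutoffCE μ X Y f := by
      rw [← hss]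
      ring
    rw [h9] at hsq
    linarith
end

section
/- Let M ≥ 2 and let B_M be the class of functions w: [0,1] → [−1,1] whose total variation is at most M. Then for any measurable forecast f: 𝒳 → [0,1] and any joint distribution of (X,Y) with Y ∈ [0,1]: Δ_Cutoff(f) ≤ Δ_wCE(f; B_M) ≤ (M+2)·Δ_Cutoff(f). -/
open MeasureTheory Set

/-- Weighted calibration error with respect to the class `B_M` of weighting functions
`w : [0,1] → [−1,1]` with total variation at most `M` on `[0,1]`:
`sup_{w ∈ B_M} E[w(f(X))·(Y − f(X))]`. -/
noncomputable def wCEBV {Ω 𝒳 : Type*} [MeasurableSpace Ω] [MeasurableSpace 𝒳]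
    (μ : Measure Ω) (X : Ω → 𝒳) (Y : Ω → ℝ) (f : 𝒳 → ℝ) (M : ℝ) : ℝ :=
  ⨆ w : {w : ℝ → ℝ // (∀ t ∈ Icc (0:ℝ) 1, w t ∈ Icc (-1:ℝ) 1) ∧
      eVariationOn w (Icc 0 1) ≤ ENNReal.ofReal M},
    ∫ ω, w.1 (f (X ω)) * (Y ω - f (X ω)) ∂μ

lemma my_evar_neg (f : ℝ → ℝ) (s : Set ℝ) :
    eVariationOn (fun x => -(f x)) s = eVariationOn f s := by
  simp only [eVariationOn, edist_neg_neg]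

lemma my_evar_add_le (f g : ℝ → ℝ) (s : Set ℝ) :
    eVariationOn (fun x => f x + g x) s ≤ eVariationOn f s + eVariationOn g s := by
  apply iSup_le
  rintro ⟨n, ⟨u, hu, us⟩⟩
  calc (∑ i ∈ Finset.range n, edist (f (u (i+1)) + g (u (i+1))) (f (u i) + g (u i)))
      ≤ ∑ i ∈ Finset.range n, (edist (f (u (i+1))) (f (u i)) + edist (g (u (i+1))) (g (u i))) := by
        refine Finset.sum_le_sum fun i _ => ?_
        rw [edist_dist, edist_dist, edist_dist]
        calc ENNReal.ofReal (dist (f (u (i+1)) + g (u (i+1))) (f (u i) + g (u i)))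
            ≤ ENNReal.ofReal (dist (f (u (i+1))) (f (u i)) + dist (g (u (i+1))) (g (u i))) :=
              ENNReal.ofReal_le_ofReal (dist_add_add_le _ _ _ _)
          _ ≤ _ := ENNReal.ofReal_add_le
    _ = (∑ i ∈ Finset.range n, edist (f (u (i+1))) (f (u i)))
        + ∑ i ∈ Finset.range n, edist (g (u (i+1))) (g (u i)) := Finset.sum_add_distrib
    _ ≤ _ := add_le_add (eVariationOn.sum_le (f := f) (n := n) hu us) (eVariationOn.sum_le (f := g) (n := n) hu us)


lemma my_indicator_evar {I : Set ℝ} (hI : I ⊆ Icc 0 1) (hIc : I.OrdConnected) :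
    eVariationOn (I.indicator (1 : ℝ → ℝ)) (Icc 0 1) ≤ 2 := by
  classical
  set U : Set ℝ := {x | ∃ a ∈ I, x ≤ a} with hU
  set W : Set ℝ := U \ I with hW
  set A : ℝ → ℝ := fun x => if x ∈ U then 0 else 1 with hA
  set B : ℝ → ℝ := fun x => if x ∈ W then 0 else 1 with hB
  have hWdown : ∀ x y : ℝ, x ≤ y → y ∈ W → x ∈ W := by
    rintro x y hxy ⟨⟨a, haI, hya⟩, hyI⟩
    refine ⟨⟨a, haI, hxy.trans hya⟩, fun hxI => hyI ?_⟩
    exact hIc.out hxI haI ⟨hxy, hya⟩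
  have hAmono : Monotone A := by
    intro x y hxy
    simp only [hA]
    by_cases hy : y ∈ U
    · have hx : x ∈ U := by obtain ⟨a, haI, hya⟩ := hy; exact ⟨a, haI, hxy.trans hya⟩
      simp [hx, hy]
    · split <;> norm_num
  have hBmono : Monotone B := by
    intro x y hxy
    simp only [hB]
    by_cases hy : y ∈ W
    · simp [hWdown x y hxy hy, hy]
    · split <;> norm_num
  have heq : ∀ x, I.indicator (1 : ℝ → ℝ) x = B x + (-(A x)) := by
    intro x
    by_cases hx : x ∈ I
    · have hxU : x ∈ U := ⟨x, hx, le_rfl⟩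
      have hxW : x ∉ W := fun h => h.2 hx
      simp [indicator_of_mem hx, hA, hB, hxU, hxW]
    · by_cases hxU : x ∈ U
      · simp [indicator_of_notMem hx, hA, hB, hxU, hW, hx]
      · have hxW : x ∉ W := fun h => hxU h.1
        simp [indicator_of_notMem hx, hA, hB, hxU, hxW]
  have hrw : I.indicator (1 : ℝ → ℝ) = fun x => B x + (-(A x)) := funext heq
  rw [hrw]
  have hmono_le : ∀ (g : ℝ → ℝ), Monotone g → (∀ x, g x = 0 ∨ g x = 1) →
      eVariationOn g (Icc (0:ℝ) 1) ≤ 1 := by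
    intro g hg hg01
    have h2 : eVariationOn g (Icc (0:ℝ) 1 ∩ Icc 0 1) ≤ ENNReal.ofReal (g 1 - g 0) :=
      (hg.monotoneOn _).eVariationOn_le (by norm_num) (by norm_num)
    rw [inter_self] at h2
    refine h2.trans ?_
    have h3 : g 1 - g 0 ≤ 1 := by rcases hg01 1 with h1 | h1 <;> rcases hg01 0 with h0 | h0 <;>
      rw [h1, h0] <;> norm_num
    calc ENNReal.ofReal (g 1 - g 0) ≤ ENNReal.ofReal 1 := ENNReal.ofReal_le_ofReal h3
      _ = 1 := ENNReal.ofReal_one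
  calc eVariationOn (fun x => B x + (-(A x))) (Icc (0:ℝ) 1)
      ≤ eVariationOn B (Icc 0 1) + eVariationOn (fun x => -(A x)) (Icc 0 1) :=
        my_evar_add_le _ _ _
    _ = eVariationOn B (Icc 0 1) + eVariationOn A (Icc 0 1) := by rw [my_evar_neg]
    _ ≤ 1 + 1 := add_le_add
        (hmono_le B hBmono fun x => by by_cases h : x ∈ W <;> simp [hB, h])
        (hmono_le A hAmono fun x => by by_cases h : x ∈ U <;> simp [hA, h])
    _ = 2 := one_add_one_eq_two


lemma cutoff_bdd {Ω 𝒳 : Type*} [MeasurableSpace Ω] [MeasurableSpace 𝒳]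
    (μ : Measure Ω) [IsProbabilityMeasure μ] (X : Ω → 𝒳) (Y : Ω → ℝ) (f : 𝒳 → ℝ)
    (hY01 : ∀ ω, Y ω ∈ Icc (0:ℝ) 1) (hf01 : ∀ x, f x ∈ Icc (0:ℝ) 1) :
    BddAbove (Set.range fun I : {I : Set ℝ // I ⊆ Icc 0 1 ∧ I.OrdConnected} =>
    |∫ ω, (Y ω - f (X ω)) * I.1.indicator (1 : ℝ → ℝ) (f (X ω)) ∂μ|) := by
  refine ⟨1, ?_⟩
  rintro x ⟨I, rfl⟩
  have h : ∀ ω, ‖(Y ω - f (X ω)) * I.1.indicator (1 : ℝ → ℝ) (f (X ω))‖ ≤ 1 := by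
    intro ω
    rw [norm_mul]
    have h1 : ‖Y ω - f (X ω)‖ ≤ 1 := by
      rw [Real.norm_eq_abs, abs_sub_le_iff]
      constructor
      · linarith [(hY01 ω).2, (hf01 (X ω)).1]
      · linarith [(hY01 ω).1, (hf01 (X ω)).2]
    have h2 : ‖I.1.indicator (1 : ℝ → ℝ) (f (X ω))‖ ≤ 1 := by
      rw [Real.norm_eq_abs]
      by_cases h : f (X ω) ∈ I.1 <;> simp [Set.indicator_apply, h]
    calc ‖Y ω - f (X ω)‖ * ‖I.1.indicator (1 : ℝ → ℝ) (f (X ω))‖ ≤ 1 * 1 :=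
      mul_le_mul h1 h2 (norm_nonneg _) zero_le_one
    _ = 1 := one_mul 1
  calc |∫ ω, (Y ω - f (X ω)) * I.1.indicator (1 : ℝ → ℝ) (f (X ω)) ∂μ|
      = ‖∫ ω, (Y ω - f (X ω)) * I.1.indicator (1 : ℝ → ℝ) (f (X ω)) ∂μ‖ :=
        (Real.norm_eq_abs _).symm
    _ ≤ 1 * (μ Set.univ).toReal :=
        norm_integral_le_of_norm_le_const (Filter.Eventually.of_forall h)
    _ = 1 := by simp

lemma abs_le_cutoff {Ω 𝒳 : Type*} [MeasurableSpace Ω] [MeasurableSpace 𝒳]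
    (μ : Measure Ω) [IsProbabilityMeasure μ] (X : Ω → 𝒳) (Y : Ω → ℝ) (f : 𝒳 → ℝ)
    (hY01 : ∀ ω, Y ω ∈ Icc (0:ℝ) 1) (hf01 : ∀ x, f x ∈ Icc (0:ℝ) 1)
    {I : Set ℝ} (hI : I ⊆ Icc 0 1) (hIc : I.OrdConnected) :
    |∫ ω, (Y ω - f (X ω)) * I.indicator (1 : ℝ → ℝ) (f (X ω)) ∂μ| ≤ cutoffCE μ X Y f :=
  le_ciSup (cutoff_bdd μ X Y f hY01 hf01) (⟨I, hI, hIc⟩ :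
    {I : Set ℝ // I ⊆ Icc 0 1 ∧ I.OrdConnected})

lemma cutoff_nonneg {Ω 𝒳 : Type*} [MeasurableSpace Ω] [MeasurableSpace 𝒳]
    (μ : Measure Ω) [IsProbabilityMeasure μ] (X : Ω → 𝒳) (Y : Ω → ℝ) (f : 𝒳 → ℝ)
    (hY01 : ∀ ω, Y ω ∈ Icc (0:ℝ) 1) (hf01 : ∀ x, f x ∈ Icc (0:ℝ) 1) :
    0 ≤ cutoffCE μ X Y f :=
  le_trans (abs_nonneg _)
    (abs_le_cutoff μ X Y f hY01 hf01 (empty_subset _) ordConnected_empty)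

lemma layer_cake {Ω 𝒳 : Type*} [MeasurableSpace Ω] [MeasurableSpace 𝒳]
    (μ : Measure Ω) [IsProbabilityMeasure μ] (X : Ω → 𝒳) (Y : Ω → ℝ) (f : 𝒳 → ℝ)
    (hX : Measurable X) (hY : Measurable Y) (hf : Measurable f)
    (hY01 : ∀ ω, Y ω ∈ Icc (0:ℝ) 1) (hf01 : ∀ x, f x ∈ Icc (0:ℝ) 1)
    (P : ℝ → ℝ) (hP : Monotone P) (hP0 : P 0 = 0) :
    |∫ ω, (Y ω - f (X ω)) * P (f (X ω)) ∂μ| ≤ P 1 * cutoffCE μ X Y f := by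
  classical
  set g : Ω → ℝ := fun ω => Y ω - f (X ω) with hg
  set B : ℝ := P 1 with hBdef
  have hB : 0 ≤ B := hP0 ▸ hP (zero_le_one)
  have hνfin : IsFiniteMeasure (volume.restrict (Ico (0:ℝ) B)) := by
    constructor
    rw [Measure.restrict_apply_univ, Real.volume_Ico]
    exact ENNReal.ofReal_lt_top
  set Is : ℝ → Set ℝ := fun s => {u ∈ Icc (0:ℝ) 1 | s < P u} with hIs
  have hgmeas : Measurable g := hY.sub (hf.comp hX)
  have hgbd : ∀ ω, |g ω| ≤ 1 := by
    intro ω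
    rw [hg, abs_sub_le_iff]
    constructor
    · linarith [(hY01 ω).2, (hf01 (X ω)).1]
    · linarith [(hY01 ω).1, (hf01 (X ω)).2]
  have hPf : ∀ ω, P (f (X ω)) ∈ Icc 0 B := fun ω =>
    ⟨hP0 ▸ hP (hf01 (X ω)).1, hP (hf01 (X ω)).2⟩
  have hindIs : ∀ (s : ℝ) (ω : Ω), (Is s).indicator (1 : ℝ → ℝ) (f (X ω)) =
      if s < P (f (X ω)) then 1 else 0 := by
    intro s ω
    by_cases h : s < P (f (X ω)) <;>
      simp [hIs, Set.indicator_apply, mem_sep_iff, h, (hf01 (X ω)).1, (hf01 (X ω)).2]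
  -- pointwise layer cake
  have hpt : ∀ ω, g ω * P (f (X ω)) =
      ∫ s in Ico (0:ℝ) B, g ω * (Is s).indicator (1 : ℝ → ℝ) (f (X ω)) := by
    intro ω
    have hind : ∀ s : ℝ, g ω * (Is s).indicator (1 : ℝ → ℝ) (f (X ω)) =
        g ω * (Iio (P (f (X ω)))).indicator (1 : ℝ → ℝ) s := by
      intro s
      rw [hindIs s ω]
      by_cases h : s < P (f (X ω)) <;> simp [Set.indicator_apply, h]
    simp_rw [hind]
    rw [integral_const_mul]
    have hmeas : ∫ s in Ico (0:ℝ) B, (Iio (P (f (X ω)))).indicator (1 : ℝ → ℝ) s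
        = P (f (X ω)) := by
      rw [integral_indicator_one measurableSet_Iio,
        measureReal_restrict_apply measurableSet_Iio]
      have h2 : Iio (P (f (X ω))) ∩ Ico 0 B = Ico 0 (P (f (X ω))) := by
        ext x
        constructor
        · rintro ⟨h1, h2, h3⟩; exact ⟨h2, h1⟩
        · rintro ⟨h1, h2⟩; exact ⟨h2, h1, lt_of_lt_of_le h2 (hPf ω).2⟩
      rw [h2, Real.volume_real_Ico, max_eq_left (by linarith [(hPf ω).1])]
      ring
    rw [hmeas]
  -- integrability of the kernel on the product
  set G : Ω × ℝ → ℝ := fun p => g p.1 * ({q : Ω × ℝ | q.2 < P (f (X q.1))}.indicator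
      (fun _ => (1:ℝ)) p) with hG
  have hGeq : ∀ p : Ω × ℝ, G p = g p.1 * (Is p.2).indicator (1 : ℝ → ℝ) (f (X p.1)) := by
    rintro ⟨ω, s⟩
    rw [hG, hindIs s ω]
    by_cases h : s < P (f (X ω)) <;> simp [Set.indicator_apply, h]
  have hGmeas : Measurable G := by
    apply Measurable.mul
    · exact hgmeas.comp measurable_fst
    · exact (measurable_const.indicator
        (measurableSet_lt measurable_snd
          ((hP.measurable.comp (hf.comp hX)).comp measurable_fst)))
  have hGint : Integrable G (μ.prod (volume.restrict (Ico (0:ℝ) B))) := by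
    refine Integrable.mono' (integrable_const 1) hGmeas.aestronglyMeasurable
      (Filter.Eventually.of_forall fun p => ?_)
    rw [hG, norm_mul]
    have h1 : ‖g p.1‖ ≤ 1 := (Real.norm_eq_abs _) ▸ hgbd p.1
    have h2 : ‖({q : Ω × ℝ | q.2 < P (f (X q.1))}.indicator (fun _ => (1:ℝ)) p)‖ ≤ 1 := by
      by_cases h : p ∈ {q : Ω × ℝ | q.2 < P (f (X q.1))} <;> simp [Set.indicator_apply, h]
    calc ‖g p.1‖ * ‖({q : Ω × ℝ | q.2 < P (f (X q.1))}.indicator (fun _ => (1:ℝ)) p)‖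
        ≤ 1 * 1 := mul_le_mul h1 h2 (norm_nonneg _) zero_le_one
      _ = 1 := one_mul 1
  have hswap : ∫ ω, (∫ s in Ico (0:ℝ) B, g ω * (Is s).indicator (1 : ℝ → ℝ) (f (X ω))) ∂μ
      = ∫ s in Ico (0:ℝ) B, (∫ ω, g ω * (Is s).indicator (1 : ℝ → ℝ) (f (X ω)) ∂μ) := by
    apply integral_integral_swap
    have huncurry : Function.uncurry
        (fun (ω : Ω) (s : ℝ) => g ω * (Is s).indicator (1 : ℝ → ℝ) (f (X ω))) = G :=
      funext fun p => (hGeq p).symm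
    rw [huncurry]
    exact hGint
  calc |∫ ω, g ω * P (f (X ω)) ∂μ|
      = |∫ s in Ico (0:ℝ) B, (∫ ω, g ω * (Is s).indicator (1 : ℝ → ℝ) (f (X ω)) ∂μ)| := by
        rw [← hswap]
        congr 1
        exact integral_congr_ae (Filter.Eventually.of_forall hpt)
    _ = ‖∫ s in Ico (0:ℝ) B, (∫ ω, g ω * (Is s).indicator (1 : ℝ → ℝ) (f (X ω)) ∂μ)‖ :=
        (Real.norm_eq_abs _).symm
    _ ≤ ∫ s in Ico (0:ℝ) B, ‖∫ ω, g ω * (Is s).indicator (1 : ℝ → ℝ) (f (X ω)) ∂μ‖ :=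
        norm_integral_le_integral_norm _
    _ ≤ ∫ _s in Ico (0:ℝ) B, cutoffCE μ X Y f := by
        apply integral_mono_of_nonneg (Filter.Eventually.of_forall fun s => norm_nonneg _)
          (integrable_const _)
        refine Filter.Eventually.of_forall fun s => ?_
        show ‖∫ ω, g ω * (Is s).indicator (1 : ℝ → ℝ) (f (X ω)) ∂μ‖ ≤ cutoffCE μ X Y f
        rw [Real.norm_eq_abs]
        refine abs_le_cutoff μ X Y f hY01 hf01 (sep_subset _ _) ?_
        constructor
        rintro x ⟨hx1, hx2⟩ y ⟨hy1, hy2⟩ z hz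
        exact ⟨⟨le_trans hx1.1 hz.1, le_trans hz.2 hy1.2⟩, lt_of_lt_of_le hx2 (hP hz.1)⟩
    _ = B * cutoffCE μ X Y f := by
        rw [setIntegral_const, Real.volume_real_Ico, smul_eq_mul,
          max_eq_left (by linarith), sub_zero]


/-- For `M ≥ 2`: `Δ_Cutoff(f) ≤ Δ_wCE(f; B_M) ≤ (M+2)·Δ_Cutoff(f)`. -/
theorem cutoff_le_wce_le_cutoff {Ω 𝒳 : Type*} [MeasurableSpace Ω] [MeasurableSpace 𝒳]
    (μ : Measure Ω) [IsProbabilityMeasure μ]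
    (X : Ω → 𝒳) (Y : Ω → ℝ) (f : 𝒳 → ℝ)
    (hX : Measurable X) (hY : Measurable Y) (hf : Measurable f)
    (hY01 : ∀ ω, Y ω ∈ Icc (0:ℝ) 1) (hf01 : ∀ x, f x ∈ Icc (0:ℝ) 1)
    (M : ℝ) (hM : 2 ≤ M) :
    cutoffCE μ X Y f ≤ wCEBV μ X Y f M ∧
      wCEBV μ X Y f M ≤ (M + 2) * cutoffCE μ X Y f := by
  classical
  have hM0 : (0:ℝ) ≤ M := by linarith
  set g : Ω → ℝ := fun ω => Y ω - f (X ω) with hg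
  have hgmeas : Measurable g := hY.sub (hf.comp hX)
  have hgbd : ∀ ω, ‖g ω‖ ≤ 1 := by
    intro ω
    rw [hg, Real.norm_eq_abs, abs_sub_le_iff]
    constructor
    · linarith [(hY01 ω).2, (hf01 (X ω)).1]
    · linarith [(hY01 ω).1, (hf01 (X ω)).2]
  have hgint : Integrable g μ := Integrable.mono' (integrable_const 1)
    hgmeas.aestronglyMeasurable (Filter.Eventually.of_forall hgbd)
  have hΔ0 : 0 ≤ cutoffCE μ X Y f := cutoff_nonneg μ X Y f hY01 hf01
  -- boundedness of the wCE family
  have hwbdd : BddAbove (Set.range fun w : {w : ℝ → ℝ //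
      (∀ t ∈ Icc (0:ℝ) 1, w t ∈ Icc (-1:ℝ) 1) ∧
      eVariationOn w (Icc 0 1) ≤ ENNReal.ofReal M} =>
      ∫ ω, w.1 (f (X ω)) * (Y ω - f (X ω)) ∂μ) := by
    refine ⟨1, ?_⟩
    rintro x ⟨w, rfl⟩
    have h : ∀ ω, ‖w.1 (f (X ω)) * (Y ω - f (X ω))‖ ≤ 1 := by
      intro ω
      rw [norm_mul]
      have h1 : ‖w.1 (f (X ω))‖ ≤ 1 := by
        rw [Real.norm_eq_abs, abs_le]
        have := w.2.1 (f (X ω)) (hf01 (X ω))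
        exact ⟨this.1, this.2⟩
      calc ‖w.1 (f (X ω))‖ * ‖Y ω - f (X ω)‖ ≤ 1 * 1 :=
        mul_le_mul h1 (hgbd ω) (norm_nonneg _) zero_le_one
      _ = 1 := one_mul 1
    calc ∫ ω, w.1 (f (X ω)) * (Y ω - f (X ω)) ∂μ
        ≤ ‖∫ ω, w.1 (f (X ω)) * (Y ω - f (X ω)) ∂μ‖ := le_abs_self _
      _ ≤ 1 * (μ Set.univ).toReal :=
          norm_integral_le_of_norm_le_const (Filter.Eventually.of_forall h)
      _ = 1 := by simp
  have h2M : (2 : ENNReal) ≤ ENNReal.ofReal M := by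
    calc (2 : ENNReal) = ENNReal.ofReal 2 := by norm_num
      _ ≤ ENNReal.ofReal M := ENNReal.ofReal_le_ofReal hM
  constructor
  · -- lower bound
    haveI : Nonempty {I : Set ℝ // I ⊆ Icc 0 1 ∧ I.OrdConnected} :=
      ⟨⟨∅, empty_subset _, ordConnected_empty⟩⟩
    refine ciSup_le fun I => ?_
    obtain ⟨I, hI, hIc⟩ := I
    have hval : ∀ t ∈ Icc (0:ℝ) 1, I.indicator (1 : ℝ → ℝ) t ∈ Icc (-1:ℝ) 1 := by
      intro t _
      by_cases h : t ∈ I <;> simp [Set.indicator_apply, h]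
    set wp : {w : ℝ → ℝ // (∀ t ∈ Icc (0:ℝ) 1, w t ∈ Icc (-1:ℝ) 1) ∧
        eVariationOn w (Icc 0 1) ≤ ENNReal.ofReal M} :=
      ⟨I.indicator (1 : ℝ → ℝ), hval, le_trans (my_indicator_evar hI hIc) h2M⟩ with hwp
    set wm : {w : ℝ → ℝ // (∀ t ∈ Icc (0:ℝ) 1, w t ∈ Icc (-1:ℝ) 1) ∧
        eVariationOn w (Icc 0 1) ≤ ENNReal.ofReal M} :=
      ⟨fun t => -(I.indicator (1 : ℝ → ℝ) t),
        fun t ht => by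
          have h := hval t ht
          rw [mem_Icc] at h
          show -(I.indicator (1 : ℝ → ℝ) t) ∈ Icc (-1:ℝ) 1
          rw [mem_Icc]
          constructor <;> linarith [h.1, h.2],
        le_trans (le_of_eq (my_evar_neg (I.indicator (1 : ℝ → ℝ)) (Icc 0 1)))
          (le_trans (my_indicator_evar hI hIc) h2M)⟩ with hwm
    have hp : ∫ ω, wp.1 (f (X ω)) * (Y ω - f (X ω)) ∂μ ≤ wCEBV μ X Y f M :=
      le_ciSup hwbdd wp
    have hm : ∫ ω, wm.1 (f (X ω)) * (Y ω - f (X ω)) ∂μ ≤ wCEBV μ X Y f M :=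
      le_ciSup hwbdd wm
    have hpeq : ∫ ω, wp.1 (f (X ω)) * (Y ω - f (X ω)) ∂μ
        = ∫ ω, (Y ω - f (X ω)) * I.indicator (1 : ℝ → ℝ) (f (X ω)) ∂μ :=
      integral_congr_ae (Filter.Eventually.of_forall fun ω => mul_comm _ _)
    have hmeq : ∫ ω, wm.1 (f (X ω)) * (Y ω - f (X ω)) ∂μ
        = -∫ ω, (Y ω - f (X ω)) * I.indicator (1 : ℝ → ℝ) (f (X ω)) ∂μ := by
      rw [← integral_neg]
      exact integral_congr_ae (Filter.Eventually.of_forall fun ω => by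
        show -(I.indicator (1 : ℝ → ℝ) (f (X ω))) * (Y ω - f (X ω)) = _
        ring)
    rw [hpeq] at hp
    rw [hmeq] at hm
    rw [abs_le]
    exact ⟨by linarith, hp⟩
  · -- upper bound
    have hne : Nonempty {w : ℝ → ℝ // (∀ t ∈ Icc (0:ℝ) 1, w t ∈ Icc (-1:ℝ) 1) ∧
        eVariationOn w (Icc 0 1) ≤ ENNReal.ofReal M} := by
      refine ⟨⟨fun _ => 0, fun t _ => by norm_num, ?_⟩⟩
      have : eVariationOn (fun _ : ℝ => (0:ℝ)) (Icc 0 1) = 0 :=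
        eVariationOn.constant_on (by
          intro x hx y hy
          obtain ⟨a, _, rfl⟩ := hx
          obtain ⟨b, _, rfl⟩ := hy
          rfl)
      rw [this]
      exact zero_le
    refine ciSup_le fun wsub => ?_
    obtain ⟨w, hw1, hw2⟩ := wsub
    simp only
    -- the variation function
    have hfin : ∀ t : ℝ, eVariationOn w (Icc 0 1 ∩ Icc 0 t) ≠ ⊤ :=
      fun t => ne_top_of_le_ne_top (ne_top_of_le_ne_top ENNReal.ofReal_ne_top hw2)
        (eVariationOn.mono w inter_subset_left)
    set V : ℝ → ℝ := fun t => (eVariationOn w (Icc 0 1 ∩ Icc 0 t)).toReal with hV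
    have key : ∀ s t : ℝ, s ∈ Icc (0:ℝ) 1 → t ∈ Icc (0:ℝ) 1 → s ≤ t →
        |w t - w s| ≤ V t - V s := by
      intro s t hs ht hst
      have hadd := eVariationOn.Icc_add_Icc w hs.1 hst hs
      have hfin2 : eVariationOn w (Icc 0 1 ∩ Icc s t) ≠ ⊤ :=
        ne_top_of_le_ne_top (ne_top_of_le_ne_top ENNReal.ofReal_ne_top hw2)
          (eVariationOn.mono w inter_subset_left)
      have hVt : V t = V s + (eVariationOn w (Icc 0 1 ∩ Icc s t)).toReal := by
        rw [hV]
        simp only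
        rw [← hadd, ENNReal.toReal_add (hfin s) hfin2]
      have hedist : ENNReal.ofReal |w t - w s| ≤ eVariationOn w (Icc 0 1 ∩ Icc s t) := by
        have := eVariationOn.edist_le w
          (show t ∈ Icc (0:ℝ) 1 ∩ Icc s t from ⟨ht, hst, le_rfl⟩)
          (show s ∈ Icc (0:ℝ) 1 ∩ Icc s t from ⟨hs, le_rfl, hst⟩)
        rwa [edist_dist, Real.dist_eq] at this
      have := (ENNReal.ofReal_le_iff_le_toReal hfin2).1 hedist
      linarith [this, hVt.ge, hVt.le]
    have hV0 : V 0 = 0 := by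
      rw [hV]
      simp only
      have hsub : (Icc (0:ℝ) 1 ∩ Icc 0 0).Subsingleton := by
        intro a ha b hb
        have h1 : a = 0 := le_antisymm ha.2.2 ha.2.1
        have h2 : b = 0 := le_antisymm hb.2.2 hb.2.1
        rw [h1, h2]
      rw [eVariationOn.subsingleton w hsub]
      rfl
    have hV1 : V 1 ≤ M := by
      rw [hV]
      simp only
      rw [inter_self]
      calc (eVariationOn w (Icc (0:ℝ) 1)).toReal ≤ (ENNReal.ofReal M).toReal :=
        ENNReal.toReal_mono ENNReal.ofReal_ne_top hw2
      _ = M := ENNReal.toReal_ofReal hM0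
    -- projection to [0,1]
    set proj : ℝ → ℝ := fun t => max 0 (min 1 t) with hproj
    have hprojmono : Monotone proj := fun a b hab =>
      max_le_max le_rfl (min_le_min le_rfl hab)
    have hprojmem : ∀ t, proj t ∈ Icc (0:ℝ) 1 :=
      fun t => ⟨le_max_left _ _, max_le zero_le_one (min_le_left _ _)⟩
    have hprojid : ∀ t ∈ Icc (0:ℝ) 1, proj t = t := by
      intro t ht
      rw [hproj]
      simp only
      rw [min_eq_right ht.2, max_eq_right ht.1]
    have hproj0 : proj 0 = 0 := hprojid 0 ⟨le_rfl, zero_le_one⟩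
    have hproj1 : proj 1 = 1 := hprojid 1 ⟨zero_le_one, le_rfl⟩
    -- Jordan decomposition pieces
    set P : ℝ → ℝ := fun t => (V (proj t) + w (proj t)) / 2 - (V 0 + w 0) / 2 with hP
    set Q : ℝ → ℝ := fun t => (V (proj t) - w (proj t)) / 2 - (V 0 - w 0) / 2 with hQ
    have hPmono : Monotone P := by
      intro a b hab
      have := key (proj a) (proj b) (hprojmem a) (hprojmem b) (hprojmono hab)
      have habs := abs_le.1 this
      rw [hP]
      simp only
      linarith [habs.1]
    have hQmono : Monotone Q := by
      intro a b hab
      have := key (proj a) (proj b) (hprojmem a) (hprojmem b) (hprojmono hab)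
      have habs := abs_le.1 this
      rw [hQ]
      simp only
      linarith [habs.2]
    have hP0 : P 0 = 0 := by rw [hP]; simp only; rw [hproj0]; ring
    have hQ0 : Q 0 = 0 := by rw [hQ]; simp only; rw [hproj0]; ring
    have hPQ1 : P 1 + Q 1 = V 1 - V 0 := by
      rw [hP, hQ]; simp only; rw [hproj1]; ring
    have hdecomp : ∀ u ∈ Icc (0:ℝ) 1, w u = w 0 + P u - Q u := by
      intro u hu
      rw [hP, hQ]
      simp only
      rw [hprojid u hu]
      ring
    -- nonnegativity and upper bounds for P, Q at f values
    have hPf : ∀ ω, P (f (X ω)) ∈ Icc 0 (P 1) := fun ω =>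
      ⟨hP0 ▸ hPmono (hf01 (X ω)).1, hPmono (hf01 (X ω)).2⟩
    have hQf : ∀ ω, Q (f (X ω)) ∈ Icc 0 (Q 1) := fun ω =>
      ⟨hQ0 ▸ hQmono (hf01 (X ω)).1, hQmono (hf01 (X ω)).2⟩
    -- integrability
    have hiP : Integrable (fun ω => g ω * P (f (X ω))) μ := by
      refine Integrable.mono' (integrable_const (P 1))
        (hgmeas.mul ((hPmono.measurable).comp (hf.comp hX))).aestronglyMeasurable
        (Filter.Eventually.of_forall fun ω => ?_)
      rw [norm_mul]
      calc ‖g ω‖ * ‖P (f (X ω))‖ ≤ 1 * P 1 := by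
            refine mul_le_mul (hgbd ω) ?_ (norm_nonneg _) zero_le_one
            rw [Real.norm_eq_abs, abs_of_nonneg (hPf ω).1]
            exact (hPf ω).2
        _ = P 1 := one_mul _
    have hiQ : Integrable (fun ω => g ω * Q (f (X ω))) μ := by
      refine Integrable.mono' (integrable_const (Q 1))
        (hgmeas.mul ((hQmono.measurable).comp (hf.comp hX))).aestronglyMeasurable
        (Filter.Eventually.of_forall fun ω => ?_)
      rw [norm_mul]
      calc ‖g ω‖ * ‖Q (f (X ω))‖ ≤ 1 * Q 1 := by
            refine mul_le_mul (hgbd ω) ?_ (norm_nonneg _) zero_le_one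
            rw [Real.norm_eq_abs, abs_of_nonneg (hQf ω).1]
            exact (hQf ω).2
        _ = Q 1 := one_mul _
    have hiw0 : Integrable (fun ω => w 0 * g ω) μ := hgint.const_mul _
    -- split the integral
    have hsplit : ∫ ω, w (f (X ω)) * (Y ω - f (X ω)) ∂μ
        = w 0 * ∫ ω, g ω ∂μ + ∫ ω, g ω * P (f (X ω)) ∂μ - ∫ ω, g ω * Q (f (X ω)) ∂μ := by
      have hpt : ∀ ω, w (f (X ω)) * (Y ω - f (X ω))
          = (w 0 * g ω + g ω * P (f (X ω))) - g ω * Q (f (X ω)) := by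
        intro ω
        rw [hdecomp (f (X ω)) (hf01 (X ω))]
        show (w 0 + P (f (X ω)) - Q (f (X ω))) * g ω = _
        ring
      have h1 : ∫ ω, (w 0 * g ω + g ω * P (f (X ω)) - g ω * Q (f (X ω))) ∂μ
          = ∫ ω, (w 0 * g ω + g ω * P (f (X ω))) ∂μ - ∫ ω, g ω * Q (f (X ω)) ∂μ :=
        integral_sub (hiw0.add hiP) hiQ
      have h2 : ∫ ω, (w 0 * g ω + g ω * P (f (X ω))) ∂μ
          = ∫ ω, w 0 * g ω ∂μ + ∫ ω, g ω * P (f (X ω)) ∂μ := integral_add hiw0 hiP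
      rw [integral_congr_ae (Filter.Eventually.of_forall hpt), h1, h2, integral_const_mul]
    -- bound each piece
    have hb0 : |w 0 * ∫ ω, g ω ∂μ| ≤ cutoffCE μ X Y f := by
      rw [abs_mul]
      have hw0 : |w 0| ≤ 1 := by
        have := hw1 0 ⟨le_rfl, zero_le_one⟩
        rw [abs_le]
        exact ⟨this.1, this.2⟩
      have hgeq : ∫ ω, g ω ∂μ
          = ∫ ω, (Y ω - f (X ω)) * (Icc (0:ℝ) 1).indicator (1 : ℝ → ℝ) (f (X ω)) ∂μ := by
        refine integral_congr_ae (Filter.Eventually.of_forall fun ω => ?_)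
        show g ω = (Y ω - f (X ω)) * (Icc (0:ℝ) 1).indicator (1 : ℝ → ℝ) (f (X ω))
        rw [indicator_of_mem (hf01 (X ω)), Pi.one_apply, mul_one]
      have habs : |∫ ω, g ω ∂μ| ≤ cutoffCE μ X Y f := by
        rw [hgeq]
        exact abs_le_cutoff μ X Y f hY01 hf01 (subset_refl _) ordConnected_Icc
      calc |w 0| * |∫ ω, g ω ∂μ| ≤ 1 * cutoffCE μ X Y f :=
        mul_le_mul hw0 habs (abs_nonneg _) zero_le_one
      _ = cutoffCE μ X Y f := one_mul _
    have hbP : |∫ ω, g ω * P (f (X ω)) ∂μ| ≤ P 1 * cutoffCE μ X Y f :=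
      layer_cake μ X Y f hX hY hf hY01 hf01 P hPmono hP0
    have hbQ : |∫ ω, g ω * Q (f (X ω)) ∂μ| ≤ Q 1 * cutoffCE μ X Y f :=
      layer_cake μ X Y f hX hY hf hY01 hf01 Q hQmono hQ0
    -- conclude
    have hsum : P 1 + Q 1 ≤ M := by rw [hPQ1, hV0]; linarith
    have h1 := abs_le.1 hb0
    have h2 := abs_le.1 hbP
    have h3 := abs_le.1 hbQ
    rw [hsplit]
    nlinarith [mul_le_mul_of_nonneg_right hsum hΔ0, h1.2, h2.2, h3.1]
end

section
/- For any measurable forecast f: 𝒳 → [0,1], any τ ∈ [0,1], and any joint distribution of (X,Y) with Y ∈ {0,1}: R_bd(f; τ) − inf over all measurable h: [0,1] → [0,1] of R_bd(h∘f; τ) ≤ Δ_ECE(f). -/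
open MeasureTheory Set

/-- Plug-in risk for the binary decision loss
`ℓ_bd(y, ŷ; τ) = τ(1−y)ŷ + (1−τ)y(1−ŷ)` with plug-in decision rule `1{g(X) ≥ τ}`. -/
noncomputable def Rbd {Ω 𝒳 : Type*} [MeasurableSpace Ω] [MeasurableSpace 𝒳]
    (μ : Measure Ω) (X : Ω → 𝒳) (Y : Ω → ℝ) (g : 𝒳 → ℝ) (τ : ℝ) : ℝ :=
  ∫ ω, (τ * (1 - Y ω) * (if τ ≤ g (X ω) then (1:ℝ) else 0)
      + (1 - τ) * Y ω * (1 - if τ ≤ g (X ω) then (1:ℝ) else 0)) ∂μ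

/-- Expected Calibration Error: `E[|E[Y | f(X)] − f(X)|]`. -/
noncomputable def eceCE {Ω 𝒳 : Type*} [MeasurableSpace Ω] [MeasurableSpace 𝒳]
    (μ : Measure Ω) (X : Ω → 𝒳) (Y : Ω → ℝ) (f : 𝒳 → ℝ) : ℝ :=
  ∫ ω, |(μ[Y | MeasurableSpace.comap (fun ω => f (X ω)) inferInstance]) ω - f (X ω)| ∂μ

section Aux

variable {Ω : Type*} {m0 : MeasurableSpace Ω}

/-- Core estimate: risk difference between a forecast `F` and any rewrapped forecast,
expressed via the conditional expectation `G = μ[Y | σ(F)]`. -/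
lemma risk_diff_le_aux (μ : Measure Ω) [IsProbabilityMeasure μ]
    (F Y G : Ω → ℝ) (hFmeas : Measurable F)
    (hm : MeasurableSpace.comap F inferInstance ≤ m0)
    (hG : G = μ[Y | MeasurableSpace.comap F inferInstance])
    (hYint : Integrable Y μ) (hFint : Integrable F μ)
    (τ : ℝ) (h : ℝ → ℝ) (hh : Measurable h) :
    ((∫ ω in F ⁻¹' Ici τ, (τ - Y ω) ∂μ) - ∫ ω in F ⁻¹' (h ⁻¹' Ici τ), (τ - Y ω) ∂μ)
      ≤ ∫ ω, |G ω - F ω| ∂μ := by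
  have hGint : Integrable G μ := hG ▸ integrable_condExp
  have hset : ∀ S : Set Ω, MeasurableSet[MeasurableSpace.comap F inferInstance] S →
      ∫ ω in S, (τ - Y ω) ∂μ = ∫ ω in S, (τ - G ω) ∂μ := by
    intro S hS
    rw [integral_sub (integrable_const τ).integrableOn hYint.integrableOn,
        integral_sub (integrable_const τ).integrableOn hGint.integrableOn, hG,
        setIntegral_condExp hm hYint hS]
  have hA : MeasurableSet[MeasurableSpace.comap F inferInstance] (F ⁻¹' Ici τ) :=
    ⟨Ici τ, measurableSet_Ici, rfl⟩
  have hB : MeasurableSet[MeasurableSpace.comap F inferInstance] (F ⁻¹' (h ⁻¹' Ici τ)) :=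
    ⟨h ⁻¹' Ici τ, hh measurableSet_Ici, rfl⟩
  have hA' : MeasurableSet (F ⁻¹' Ici τ) := hm _ hA
  have hB' : MeasurableSet (F ⁻¹' (h ⁻¹' Ici τ)) := hm _ hB
  have hτG : Integrable (fun ω => τ - G ω) μ := (integrable_const τ).sub hGint
  rw [hset _ hA, hset _ hB, ← integral_indicator hA', ← integral_indicator hB',
      ← integral_sub (hτG.indicator hA') (hτG.indicator hB')]
  refine integral_mono ((hτG.indicator hA').sub (hτG.indicator hB'))
    (hGint.sub hFint).abs fun ω => ?_
  by_cases hωA : ω ∈ F ⁻¹' Ici τ <;> by_cases hωB : ω ∈ F ⁻¹' (h ⁻¹' Ici τ) <;>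
    simp only [Set.indicator, hωA, hωB, if_true, if_false]
  · simp [abs_nonneg]
  · have hτF : τ ≤ F ω := hωA
    calc τ - G ω - 0 ≤ F ω - G ω := by linarith
      _ ≤ |F ω - G ω| := le_abs_self _
      _ = |G ω - F ω| := abs_sub_comm _ _
  · have hτF : F ω < τ := lt_of_not_ge hωA
    calc 0 - (τ - G ω) = G ω - τ := by ring
      _ ≤ G ω - F ω := by linarith
      _ ≤ |G ω - F ω| := le_abs_self _
  · simp [abs_nonneg]

end Aux

/-- ECE bounds the risk gap over all measurable wrappers `h : [0,1] → [0,1]`: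
`R_bd(f; τ) − inf_h R_bd(h∘f; τ) ≤ Δ_ECE(f)`. -/
theorem risk_gap_le_ece {Ω 𝒳 : Type*} [MeasurableSpace Ω] [MeasurableSpace 𝒳]
    (μ : Measure Ω) [IsProbabilityMeasure μ]
    (X : Ω → 𝒳) (Y : Ω → ℝ) (f : 𝒳 → ℝ)
    (hX : Measurable X) (hY : Measurable Y) (hf : Measurable f)
    (hYbin : ∀ ω, Y ω = 0 ∨ Y ω = 1) (hf01 : ∀ x, f x ∈ Icc (0:ℝ) 1)
    (τ : ℝ) (hτ : τ ∈ Icc (0:ℝ) 1) :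
    Rbd μ X Y f τ -
        sInf {r : ℝ | ∃ h : ℝ → ℝ, Measurable h ∧ (∀ t, h t ∈ Icc (0:ℝ) 1) ∧
          r = Rbd μ X Y (fun x => h (f x)) τ}
      ≤ eceCE μ X Y f := by
  classical
  have hFmeas : Measurable (fun ω => f (X ω)) := hf.comp hX
  have hm : MeasurableSpace.comap (fun ω => f (X ω)) inferInstance ≤ ‹MeasurableSpace Ω› :=
    hFmeas.comap_le
  have hYint : Integrable Y μ := by
    refine (integrable_const (1:ℝ)).mono' hY.aestronglyMeasurable (ae_of_all _ fun ω => ?_)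
    rcases hYbin ω with h | h <;> simp [h]
  have hFint : Integrable (fun ω => f (X ω)) μ := by
    refine (integrable_const (1:ℝ)).mono' hFmeas.aestronglyMeasurable (ae_of_all _ fun ω => ?_)
    have h1 := (hf01 (X ω)).1
    have h2 := (hf01 (X ω)).2
    simp only [Real.norm_eq_abs]
    rw [abs_le]
    exact ⟨by linarith, h2⟩
  -- Rewrite Rbd in terms of a set integral
  have hRbd : ∀ g : 𝒳 → ℝ, Measurable g → Rbd μ X Y g τ =
      (∫ ω, (1 - τ) * Y ω ∂μ) + ∫ ω in (fun ω => g (X ω)) ⁻¹' Ici τ, (τ - Y ω) ∂μ := by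
    intro g hg
    have hS : MeasurableSet ((fun ω => g (X ω)) ⁻¹' Ici τ) :=
      (hg.comp hX) measurableSet_Ici
    have hτY : Integrable (fun ω => τ - Y ω) μ := (integrable_const τ).sub hYint
    rw [Rbd, ← integral_indicator hS,
        ← integral_add (hYint.const_mul _) (hτY.indicator hS)]
    refine integral_congr_ae (ae_of_all _ fun ω => ?_)
    by_cases hω : τ ≤ g (X ω) <;>
      simp only [Set.indicator, mem_preimage, mem_Ici, hω, if_true, if_false] <;> ring
  have main : ∀ h : ℝ → ℝ, Measurable h →
      Rbd μ X Y f τ - Rbd μ X Y (fun x => h (f x)) τ ≤ eceCE μ X Y f := by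
    intro h hh
    have key := risk_diff_le_aux μ (fun ω => f (X ω)) Y
      (μ[Y | MeasurableSpace.comap (fun ω => f (X ω)) inferInstance]) hFmeas hm rfl
      hYint hFint τ h hh
    have hBeq : (fun ω => (fun x => h (f x)) (X ω)) ⁻¹' Ici τ
        = (fun ω => f (X ω)) ⁻¹' (h ⁻¹' Ici τ) := rfl
    rw [hRbd f hf, hRbd (fun x => h (f x)) (hh.comp hf), hBeq]
    have hece : eceCE μ X Y f =
        ∫ ω, |(μ[Y | MeasurableSpace.comap (fun ω => f (X ω)) inferInstance]) ω - f (X ω)| ∂μ :=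
      rfl
    rw [hece]
    linarith [key]
  have hne : Set.Nonempty {r : ℝ | ∃ h : ℝ → ℝ, Measurable h ∧ (∀ t, h t ∈ Icc (0:ℝ) 1) ∧
      r = Rbd μ X Y (fun x => h (f x)) τ} :=
    ⟨Rbd μ X Y (fun x => (fun _ : ℝ => (0:ℝ)) (f x)) τ, fun _ => 0, measurable_const,
      fun t => ⟨le_refl 0, zero_le_one⟩, rfl⟩
  have hlb : Rbd μ X Y f τ - eceCE μ X Y f ≤
      sInf {r : ℝ | ∃ h : ℝ → ℝ, Measurable h ∧ (∀ t, h t ∈ Icc (0:ℝ) 1) ∧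
        r = Rbd μ X Y (fun x => h (f x)) τ} := by
    refine le_csInf hne ?_
    rintro r ⟨h, hh, -, rfl⟩
    linarith [main h hh]
  linarith
end

section
/- For any measurable forecast f: 𝒳 → [0,1], any τ ∈ [0,1], and any joint distribution of (X,Y) with Y ∈ {0,1}: R_bd(f; τ) − inf over all monotone non-decreasing h: [0,1] → [0,1] of R_bd(h∘f; τ) ≤ 2·Δ_Cutoff(f). -/
open MeasureTheory Set

lemma aux_int_bdd {Ω : Type*} [MeasurableSpace Ω] (μ : Measure Ω) [IsProbabilityMeasure μ]
    (g : Ω → ℝ) (hm : Measurable g) (C : ℝ) (hb : ∀ ω, |g ω| ≤ C) : Integrable g μ :=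
  ⟨hm.aestronglyMeasurable, HasFiniteIntegral.of_bounded
    (ae_of_all _ (by simpa [Real.norm_eq_abs] using hb))⟩

lemma aux_ce_bound {Ω 𝒳 : Type*} [MeasurableSpace Ω] [MeasurableSpace 𝒳]
    (μ : Measure Ω) [IsProbabilityMeasure μ]
    (X : Ω → 𝒳) (Y : Ω → ℝ) (f : 𝒳 → ℝ)
    (hYbin : ∀ ω, Y ω = 0 ∨ Y ω = 1) (hf01 : ∀ x, f x ∈ Icc (0:ℝ) 1)
    (S : Set ℝ) (hS : S.OrdConnected) :
    |∫ ω, (Y ω - f (X ω)) * S.indicator (1 : ℝ → ℝ) (f (X ω)) ∂μ|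
      ≤ cutoffCE μ X Y f := by
  have hbdd : BddAbove (Set.range fun I : {I : Set ℝ // I ⊆ Icc 0 1 ∧ I.OrdConnected} =>
      |∫ ω, (Y ω - f (X ω)) * I.1.indicator (1 : ℝ → ℝ) (f (X ω)) ∂μ|) := by
    refine ⟨1, ?_⟩
    rintro r ⟨I, rfl⟩
    have hb : ∀ ω, ‖(Y ω - f (X ω)) * I.1.indicator (1 : ℝ → ℝ) (f (X ω))‖ ≤ 1 := by
      intro ω
      have h1 : |Y ω - f (X ω)| ≤ 1 := by
        rcases hYbin ω with h | h <;> rcases hf01 (X ω) with ⟨h0, h1⟩ <;>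
          rw [abs_le] <;> constructor <;> nlinarith
      have h2 : |I.1.indicator (1 : ℝ → ℝ) (f (X ω))| ≤ 1 := by
        by_cases hmem : f (X ω) ∈ I.1 <;> simp [hmem]
      rw [Real.norm_eq_abs, abs_mul]
      nlinarith [abs_nonneg (Y ω - f (X ω)), abs_nonneg (I.1.indicator (1 : ℝ → ℝ) (f (X ω)))]
    have := norm_integral_le_of_norm_le_const (μ := μ) (ae_of_all _ hb)
    simpa [Real.norm_eq_abs] using this
  have hkey : ∀ ω, S.indicator (1 : ℝ → ℝ) (f (X ω))
      = (S ∩ Icc 0 1).indicator (1 : ℝ → ℝ) (f (X ω)) := by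
    intro ω
    by_cases hmem : f (X ω) ∈ S
    · rw [Set.indicator_of_mem hmem,
        Set.indicator_of_mem (Set.mem_inter hmem (hf01 (X ω)))]
    · rw [Set.indicator_of_notMem hmem,
        Set.indicator_of_notMem (fun hc => hmem hc.1)]
  rw [show (∫ ω, (Y ω - f (X ω)) * S.indicator (1 : ℝ → ℝ) (f (X ω)) ∂μ)
      = ∫ ω, (Y ω - f (X ω)) * (S ∩ Icc 0 1).indicator (1 : ℝ → ℝ) (f (X ω)) ∂μ by
    simp only [hkey]]
  exact le_ciSup hbdd ⟨S ∩ Icc 0 1, inter_subset_right, hS.inter Set.ordConnected_Icc⟩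

lemma aux_gap {Ω 𝒳 : Type*} [MeasurableSpace Ω] [MeasurableSpace 𝒳]
    (μ : Measure Ω) [IsProbabilityMeasure μ]
    (X : Ω → 𝒳) (Y : Ω → ℝ) (f : 𝒳 → ℝ)
    (hX : Measurable X) (hY : Measurable Y) (hf : Measurable f)
    (hYbin : ∀ ω, Y ω = 0 ∨ Y ω = 1) (hf01 : ∀ x, f x ∈ Icc (0:ℝ) 1)
    (τ : ℝ) (hτ : τ ∈ Icc (0:ℝ) 1) (h : ℝ → ℝ) (hmono : Monotone h) :
    Rbd μ X Y f τ - Rbd μ X Y (fun x => h (f x)) τ ≤ 2 * cutoffCE μ X Y f := by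
  obtain ⟨hτ0, hτ1⟩ := hτ
  set S : Set ℝ := {t | τ ≤ h t} with hSdef
  have hSoc : S.OrdConnected := by
    constructor
    intro a ha b _ c hc
    exact le_trans ha (hmono hc.1)
  have hSm : MeasurableSet S := hSoc.measurableSet
  set d1 : Ω → ℝ := fun ω => if τ ≤ f (X ω) then 1 else 0 with hd1def
  set d2 : Ω → ℝ := fun ω => if τ ≤ h (f (X ω)) then 1 else 0 with hd2def
  have hd1m : Measurable d1 :=
    Measurable.ite (measurableSet_le measurable_const (hf.comp hX))
      measurable_const measurable_const
  have hd2m : Measurable d2 := by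
    have : MeasurableSet {ω | τ ≤ h (f (X ω))} := (hf.comp hX) hSm
    exact Measurable.ite this measurable_const measurable_const
  have hd1b : ∀ ω, |d1 ω| ≤ 1 := by intro ω; simp only [hd1def]; split <;> norm_num
  have hd2b : ∀ ω, |d2 ω| ≤ 1 := by intro ω; simp only [hd2def]; split <;> norm_num
  have hYb : ∀ ω, |Y ω| ≤ 1 := by intro ω; rcases hYbin ω with h' | h' <;> simp [h']
  have hfb : ∀ ω, |f (X ω)| ≤ 1 := by
    intro ω; rcases hf01 (X ω) with ⟨h0, h1⟩; rw [abs_le]; constructor <;> linarith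
  have hYfm : Measurable fun ω => f (X ω) := hf.comp hX
  -- Integrability of all pieces
  have hIntF : ∀ d : Ω → ℝ, Measurable d → (∀ ω, |d ω| ≤ 1) →
      Integrable (fun ω => τ * (1 - Y ω) * d ω + (1 - τ) * Y ω * (1 - d ω)) μ := by
    intro d hdm hdb
    refine aux_int_bdd μ _ ?_ 4 ?_
    · exact ((measurable_const.mul (measurable_const.sub hY)).mul hdm).add
        ((measurable_const.mul hY).mul (measurable_const.sub hdm))
    · intro ω
      have h1 := hYb ω; have h2 := hdb ω
      rw [abs_le] at h1 h2 ⊢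
      constructor <;> nlinarith [h1.1, h1.2, h2.1, h2.2]
  have hIntA : Integrable (fun ω => (τ - f (X ω)) * (d1 ω - d2 ω)) μ := by
    refine aux_int_bdd μ _ ((measurable_const.sub hYfm).mul (hd1m.sub hd2m)) 4 ?_
    intro ω
    have h1 := hfb ω; have h2 := hd1b ω; have h3 := hd2b ω
    rw [abs_le] at h1 h2 h3 ⊢
    constructor <;> nlinarith [h1.1, h1.2, h2.1, h2.2, h3.1, h3.2]
  have hIntB : ∀ d : Ω → ℝ, Measurable d → (∀ ω, |d ω| ≤ 1) →
      Integrable (fun ω => (Y ω - f (X ω)) * d ω) μ := by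
    intro d hdm hdb
    refine aux_int_bdd μ _ ((hY.sub hYfm).mul hdm) 2 ?_
    intro ω
    have h1 := hYb ω; have h2 := hfb ω; have h3 := hdb ω
    rw [abs_le] at h1 h2 h3 ⊢
    constructor <;> nlinarith [h1.1, h1.2, h2.1, h2.2, h3.1, h3.2]
  have hIB1 := hIntB d1 hd1m hd1b
  have hIB2 := hIntB d2 hd2m hd2b
  -- Step 1: express the risk gap as a single integral
  have step1 : Rbd μ X Y f τ - Rbd μ X Y (fun x => h (f x)) τ
      = ∫ ω, (τ - Y ω) * (d1 ω - d2 ω) ∂μ := by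
    rw [Rbd, Rbd, ← integral_sub (hIntF d1 hd1m hd1b) (hIntF d2 hd2m hd2b)]
    apply integral_congr_ae
    filter_upwards with ω
    simp only [hd1def, hd2def]
    ring
  -- Step 2: decompose
  have step2 : (∫ ω, (τ - Y ω) * (d1 ω - d2 ω) ∂μ)
      = (∫ ω, (τ - f (X ω)) * (d1 ω - d2 ω) ∂μ)
        + (∫ ω, (Y ω - f (X ω)) * d2 ω ∂μ)
        - (∫ ω, (Y ω - f (X ω)) * d1 ω ∂μ) := by
    have e : (∫ ω, (τ - Y ω) * (d1 ω - d2 ω) ∂μ)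
        = ∫ ω, (((τ - f (X ω)) * (d1 ω - d2 ω) + (Y ω - f (X ω)) * d2 ω)
            - (Y ω - f (X ω)) * d1 ω) ∂μ := by
      apply integral_congr_ae
      filter_upwards with ω
      ring
    have hAB : Integrable
        (fun ω => (τ - f (X ω)) * (d1 ω - d2 ω) + (Y ω - f (X ω)) * d2 ω) μ :=
      hIntA.add hIB2
    rw [e, integral_sub hAB hIB1, integral_add hIntA hIB2]
  -- Step 3: first term is nonpositive
  have step3 : (∫ ω, (τ - f (X ω)) * (d1 ω - d2 ω) ∂μ) ≤ 0 := by
    apply integral_nonpos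
    intro ω
    simp only [hd1def, hd2def, Pi.zero_apply]
    split_ifs with h1 h2 h2 <;> nlinarith
  -- Step 4: CE bounds
  have ce1 : |∫ ω, (Y ω - f (X ω)) * d1 ω ∂μ| ≤ cutoffCE μ X Y f := by
    have e1 : ∀ ω, d1 ω = (Ici τ).indicator (1 : ℝ → ℝ) (f (X ω)) := by
      intro ω; simp [hd1def, Set.indicator_apply]
    simp only [e1]
    exact aux_ce_bound μ X Y f hYbin hf01 (Ici τ) Set.ordConnected_Ici
  have ce2 : |∫ ω, (Y ω - f (X ω)) * d2 ω ∂μ| ≤ cutoffCE μ X Y f := by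
    have e2 : ∀ ω, d2 ω = S.indicator (1 : ℝ → ℝ) (f (X ω)) := by
      intro ω; simp [hd2def, hSdef, Set.indicator_apply]
    simp only [e2]
    exact aux_ce_bound μ X Y f hYbin hf01 S hSoc
  have h4 : (∫ ω, (Y ω - f (X ω)) * d2 ω ∂μ) ≤ cutoffCE μ X Y f :=
    le_trans (le_abs_self _) ce2
  have h5 : -(∫ ω, (Y ω - f (X ω)) * d1 ω ∂μ) ≤ cutoffCE μ X Y f :=
    le_trans (neg_le_abs _) ce1
  rw [step1, step2]
  linarith

/-- Cutoff Calibration Error bounds the monotone risk gap: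
`R_bd(f; τ) − inf over monotone non-decreasing h : [0,1] → [0,1] of R_bd(h∘f; τ)
  ≤ 2·Δ_Cutoff(f)`. -/
theorem monotone_risk_gap_le_two_cutoff {Ω 𝒳 : Type*} [MeasurableSpace Ω] [MeasurableSpace 𝒳]
    (μ : Measure Ω) [IsProbabilityMeasure μ]
    (X : Ω → 𝒳) (Y : Ω → ℝ) (f : 𝒳 → ℝ)
    (hX : Measurable X) (hY : Measurable Y) (hf : Measurable f)
    (hYbin : ∀ ω, Y ω = 0 ∨ Y ω = 1) (hf01 : ∀ x, f x ∈ Icc (0:ℝ) 1)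
    (τ : ℝ) (hτ : τ ∈ Icc (0:ℝ) 1) :
    Rbd μ X Y f τ -
        sInf {r : ℝ | ∃ h : ℝ → ℝ, Monotone h ∧ (∀ t, h t ∈ Icc (0:ℝ) 1) ∧
          r = Rbd μ X Y (fun x => h (f x)) τ}
      ≤ 2 * cutoffCE μ X Y f := by
  rw [sub_le_iff_le_add, add_comm, ← sub_le_iff_le_add]
  apply le_csInf
  · refine ⟨Rbd μ X Y (fun x => max 0 (min (f x) 1)) τ, fun t => max 0 (min t 1), ?_, ?_, rfl⟩
    · exact monotone_const.max ((monotone_id.min monotone_const))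
    · intro t
      constructor
      · exact le_max_left _ _
      · simp only [max_le_iff]
        exact ⟨zero_le_one, min_le_right _ _⟩
  · rintro r ⟨h, hmono, _, rfl⟩
    have := aux_gap μ X Y f hX hY hf hYbin hf01 τ hτ h hmono
    linarith
end

section
/- For any measurable forecast f: 𝒳 → [0,1], any threshold Y* ∈ [0,1], and any joint distribution of (X,Y) with Y ∈ [0,1]: (i) R_st(f; Y*) − inf over all monotone non-decreasing h: [0,1] → [0,1] of R_st(h∘f; Y*) ≤ 2·Δ_Cutoff(f); and (ii) R_st(f; Y*) − inf over all measurable h: [0,1] → [0,1] of R_st(h∘f; Y*) ≤ Δ_ECE(f). -/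
open MeasureTheory Set

/-- Sign-testing risk with threshold `Y*`:
`R_st(g; Y*) = E[(Y − Y*)·1{g(X) ≤ Y*}·1{Y > Y*}] + E[(Y* − Y)·1{g(X) > Y*}·1{Y ≤ Y*}]`. -/
noncomputable def Rst {Ω 𝒳 : Type*} [MeasurableSpace Ω] [MeasurableSpace 𝒳]
    (μ : Measure Ω) (X : Ω → 𝒳) (Y : Ω → ℝ) (g : 𝒳 → ℝ) (ystar : ℝ) : ℝ :=
  (∫ ω, (Y ω - ystar) * (if g (X ω) ≤ ystar then (1:ℝ) else 0)
      * (if ystar < Y ω then (1:ℝ) else 0) ∂μ)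
    + ∫ ω, (ystar - Y ω) * (if ystar < g (X ω) then (1:ℝ) else 0)
      * (if Y ω ≤ ystar then (1:ℝ) else 0) ∂μ

section Aux

variable {Ω : Type*} [MeasurableSpace Ω] {μ : Measure Ω}

private lemma integrable_of_bdd [IsFiniteMeasure μ] {F : Ω → ℝ} {C : ℝ}
    (hF : AEStronglyMeasurable F μ) (h : ∀ ω, |F ω| ≤ C) : Integrable F μ :=
  Integrable.mono' (integrable_const C) hF
    (Filter.Eventually.of_forall fun ω => by simpa [Real.norm_eq_abs] using h ω)

/-- Generalized sign-testing risk on the base space. -/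
noncomputable def Rgen (μ : Measure Ω) (Y ψ : Ω → ℝ) (y : ℝ) : ℝ :=
  (∫ ω, (Y ω - y) * (if ψ ω ≤ y then (1:ℝ) else 0) * (if y < Y ω then (1:ℝ) else 0) ∂μ)
    + ∫ ω, (y - Y ω) * (if y < ψ ω then (1:ℝ) else 0) * (if Y ω ≤ y then (1:ℝ) else 0) ∂μ

private lemma meas_ind_le {ψ : Ω → ℝ} (hψ : Measurable ψ) (y : ℝ) :
    Measurable (fun ω => if ψ ω ≤ y then (1:ℝ) else 0) :=
  Measurable.ite (measurableSet_le hψ measurable_const) measurable_const measurable_const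

private lemma meas_ind_lt {ψ : Ω → ℝ} (hψ : Measurable ψ) (y : ℝ) :
    Measurable (fun ω => if y < ψ ω then (1:ℝ) else 0) :=
  Measurable.ite (measurableSet_lt measurable_const hψ) measurable_const measurable_const

private lemma abs_ind_le (c : Prop) [Decidable c] : |if c then (1:ℝ) else 0| ≤ 1 := by
  split_ifs <;> norm_num

private lemma prod2_bd {a b : ℝ} (ha : |a| ≤ 1) (hb : |b| ≤ 1) : |a * b| ≤ 1 := by
  rw [abs_mul]
  exact mul_le_one₀ ha (abs_nonneg b) hb

private lemma prod3_bd {a b c : ℝ} (ha : |a| ≤ 1) (hb : |b| ≤ 1) (hc : |c| ≤ 1) :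
    |a * b * c| ≤ 1 :=
  prod2_bd (prod2_bd ha hb) hc

private lemma intg_shape [IsProbabilityMeasure μ] {G i1 i2 : Ω → ℝ} (hG : Measurable G)
    (h1 : Measurable i1) (h2 : Measurable i2) (bG : ∀ ω, |G ω| ≤ 1) (b1 : ∀ ω, |i1 ω| ≤ 1)
    (b2 : ∀ ω, |i2 ω| ≤ 1) : Integrable (fun ω => G ω * i1 ω * i2 ω) μ :=
  integrable_of_bdd ((hG.mul h1).mul h2).aestronglyMeasurable
    (fun ω => prod3_bd (bG ω) (b1 ω) (b2 ω))

private lemma Rgen_nonneg (Y ψ : Ω → ℝ) (y : ℝ) : 0 ≤ Rgen μ Y ψ y := by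
  refine add_nonneg (integral_nonneg fun ω => ?_) (integral_nonneg fun ω => ?_)
  · by_cases h1 : ψ ω ≤ y <;> by_cases h2 : y < Y ω <;> simp [h1, h2] <;> linarith
  · by_cases h1 : y < ψ ω <;> by_cases h2 : Y ω ≤ y <;> simp [h1, h2] <;> linarith

private lemma ymy_bd {Yω y : ℝ} (hY : Yω ∈ Icc (0:ℝ) 1) (hy : y ∈ Icc (0:ℝ) 1) :
    |Yω - y| ≤ 1 := by
  rw [abs_le]; constructor <;> [linarith [hY.1, hy.2]; linarith [hY.2, hy.1]]

private lemma intg_piece1 [IsProbabilityMeasure μ] {Y : Ω → ℝ} (hY : Measurable Y)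
    (hY01 : ∀ ω, Y ω ∈ Icc (0:ℝ) 1) {ψ : Ω → ℝ} (hψ : Measurable ψ) {y : ℝ}
    (hy : y ∈ Icc (0:ℝ) 1) :
    Integrable (fun ω => (Y ω - y) * (if ψ ω ≤ y then (1:ℝ) else 0)
      * (if y < Y ω then (1:ℝ) else 0)) μ :=
  intg_shape (hY.sub measurable_const) (meas_ind_le hψ y) (meas_ind_lt hY y)
    (fun ω => ymy_bd (hY01 ω) hy) (fun ω => abs_ind_le _) (fun ω => abs_ind_le _)

private lemma intg_piece2 [IsProbabilityMeasure μ] {Y : Ω → ℝ} (hY : Measurable Y)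
    (hY01 : ∀ ω, Y ω ∈ Icc (0:ℝ) 1) {ψ : Ω → ℝ} (hψ : Measurable ψ) {y : ℝ}
    (hy : y ∈ Icc (0:ℝ) 1) :
    Integrable (fun ω => (y - Y ω) * (if y < ψ ω then (1:ℝ) else 0)
      * (if Y ω ≤ y then (1:ℝ) else 0)) μ := by
  refine intg_shape (measurable_const.sub hY) (meas_ind_lt hψ y) (meas_ind_le hY y)
    (fun ω => ?_) (fun ω => abs_ind_le _) (fun ω => abs_ind_le _)
  rw [abs_sub_comm]; exact ymy_bd (hY01 ω) hy

private lemma Rgen_diff [IsProbabilityMeasure μ] {Y : Ω → ℝ} (hY : Measurable Y)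
    (hY01 : ∀ ω, Y ω ∈ Icc (0:ℝ) 1) {ψ1 ψ2 : Ω → ℝ} (h1 : Measurable ψ1) (h2 : Measurable ψ2)
    {y : ℝ} (hy : y ∈ Icc (0:ℝ) 1) :
    Rgen μ Y ψ1 y - Rgen μ Y ψ2 y
      = ∫ ω, ((if y < ψ1 ω then (1:ℝ) else 0) - (if y < ψ2 ω then (1:ℝ) else 0))
          * (y - Y ω) ∂μ := by
  have e1 : ∀ a : ℝ, (if a ≤ y then (1:ℝ) else 0) = 1 - (if y < a then (1:ℝ) else 0) := by
    intro a
    rcases le_or_gt a y with h | h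
    · simp [h, not_lt.mpr h]
    · simp [not_le.mpr h, h]
  have I1 := intg_piece1 hY hY01 h1 hy (μ := μ)
  have I1' := intg_piece1 hY hY01 h2 hy (μ := μ)
  have I2 := intg_piece2 hY hY01 h1 hy (μ := μ)
  have I2' := intg_piece2 hY hY01 h2 hy (μ := μ)
  have hsplit : Rgen μ Y ψ1 y - Rgen μ Y ψ2 y
      = ((∫ ω, (Y ω - y) * (if ψ1 ω ≤ y then (1:ℝ) else 0) * (if y < Y ω then (1:ℝ) else 0) ∂μ)
          - ∫ ω, (Y ω - y) * (if ψ2 ω ≤ y then (1:ℝ) else 0)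
              * (if y < Y ω then (1:ℝ) else 0) ∂μ)
        + ((∫ ω, (y - Y ω) * (if y < ψ1 ω then (1:ℝ) else 0)
              * (if Y ω ≤ y then (1:ℝ) else 0) ∂μ)
          - ∫ ω, (y - Y ω) * (if y < ψ2 ω then (1:ℝ) else 0)
              * (if Y ω ≤ y then (1:ℝ) else 0) ∂μ) := by
    unfold Rgen; ring
  have J1 : Integrable (fun ω =>
      ((Y ω - y) * (if ψ1 ω ≤ y then (1:ℝ) else 0) * (if y < Y ω then (1:ℝ) else 0))
        - ((Y ω - y) * (if ψ2 ω ≤ y then (1:ℝ) else 0) * (if y < Y ω then (1:ℝ) else 0))) μ :=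
    I1.sub I1'
  have J2 : Integrable (fun ω =>
      ((y - Y ω) * (if y < ψ1 ω then (1:ℝ) else 0) * (if Y ω ≤ y then (1:ℝ) else 0))
        - ((y - Y ω) * (if y < ψ2 ω then (1:ℝ) else 0) * (if Y ω ≤ y then (1:ℝ) else 0))) μ :=
    I2.sub I2'
  rw [hsplit, ← integral_sub I1 I1', ← integral_sub I2 I2', ← integral_add J1 J2]
  refine integral_congr_ae (Filter.Eventually.of_forall fun ω => ?_)
  simp only
  rw [e1 (ψ1 ω), e1 (ψ2 ω), e1 (Y ω)]
  ring

end Aux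

/-- For the sign-testing risk: (i) the monotone risk gap is at most `2·Δ_Cutoff(f)`, and
(ii) the unconstrained risk gap is at most `Δ_ECE(f)`. -/
theorem sign_testing_risk_gaps {Ω 𝒳 : Type*} [MeasurableSpace Ω] [MeasurableSpace 𝒳]
    (μ : Measure Ω) [IsProbabilityMeasure μ]
    (X : Ω → 𝒳) (Y : Ω → ℝ) (f : 𝒳 → ℝ)
    (hX : Measurable X) (hY : Measurable Y) (hf : Measurable f)
    (hY01 : ∀ ω, Y ω ∈ Icc (0:ℝ) 1) (hf01 : ∀ x, f x ∈ Icc (0:ℝ) 1)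
    (ystar : ℝ) (hystar : ystar ∈ Icc (0:ℝ) 1) :
    (Rst μ X Y f ystar -
        sInf {r : ℝ | ∃ h : ℝ → ℝ, Monotone h ∧ (∀ t, h t ∈ Icc (0:ℝ) 1) ∧
          r = Rst μ X Y (fun x => h (f x)) ystar}
      ≤ 2 * cutoffCE μ X Y f) ∧
    (Rst μ X Y f ystar -
        sInf {r : ℝ | ∃ h : ℝ → ℝ, Measurable h ∧ (∀ t, h t ∈ Icc (0:ℝ) 1) ∧
          r = Rst μ X Y (fun x => h (f x)) ystar}
      ≤ eceCE μ X Y f) := by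
  classical
  set φ : Ω → ℝ := fun ω => f (X ω) with hφdef
  have hφ : Measurable φ := hf.comp hX
  have hφ01 : ∀ ω, φ ω ∈ Icc (0:ℝ) 1 := fun ω => hf01 (X ω)
  have hRst_eq : ∀ g : 𝒳 → ℝ, Rst μ X Y g ystar = Rgen μ Y (fun ω => g (X ω)) ystar :=
    fun g => rfl
  have hYφ_bd : ∀ ω, |Y ω - φ ω| ≤ 1 := fun ω => by
    rw [abs_le]; constructor <;>
      [linarith [(hY01 ω).1, (hφ01 ω).2]; linarith [(hY01 ω).2, (hφ01 ω).1]]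
  -- boundedness of the cutoffCE family and the generic `≤ cutoffCE` bound
  have hbddA : BddAbove (Set.range fun I : {I : Set ℝ // I ⊆ Icc 0 1 ∧ I.OrdConnected} =>
      |∫ ω, (Y ω - f (X ω)) * I.1.indicator (1 : ℝ → ℝ) (f (X ω)) ∂μ|) := by
    refine ⟨1, ?_⟩
    rintro r ⟨I, rfl⟩
    have := norm_integral_le_of_norm_le_const (μ := μ) (C := 1)
      (f := fun ω => (Y ω - f (X ω)) * I.1.indicator (1 : ℝ → ℝ) (f (X ω)))
      (Filter.Eventually.of_forall fun ω => ?_)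
    · simpa [Real.norm_eq_abs] using this
    · rw [Real.norm_eq_abs]
      have h2 : |I.1.indicator (1 : ℝ → ℝ) (f (X ω))| ≤ 1 := by
        by_cases hmem : f (X ω) ∈ I.1
        · simp [Set.indicator_of_mem hmem]
        · simp [Set.indicator_of_notMem hmem]
      exact prod2_bd (hYφ_bd ω) h2
  have hcut_le : ∀ (I : Set ℝ), I ⊆ Icc 0 1 → I.OrdConnected →
      |∫ ω, (Y ω - f (X ω)) * I.indicator (1 : ℝ → ℝ) (f (X ω)) ∂μ| ≤ cutoffCE μ X Y f :=
    fun I hsub hoc =>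
      le_ciSup hbddA (⟨I, hsub, hoc⟩ : {I : Set ℝ // I ⊆ Icc 0 1 ∧ I.OrdConnected})
  -- integrability of indicator-type integrands
  have int_ind : ∀ (I : Set ℝ), MeasurableSet I →
      Integrable (fun ω => (Y ω - f (X ω)) * I.indicator (1 : ℝ → ℝ) (f (X ω))) μ := by
    intro I hI
    refine integrable_of_bdd (C := 1)
      ((hY.sub hφ).mul ((measurable_one.indicator hI).comp hφ)).aestronglyMeasurable
      fun ω => ?_
    have h2 : |I.indicator (1 : ℝ → ℝ) (f (X ω))| ≤ 1 := by
      by_cases hmem : f (X ω) ∈ I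
      · simp [Set.indicator_of_mem hmem]
      · simp [Set.indicator_of_notMem hmem]
    exact prod2_bd (hYφ_bd ω) h2
  constructor
  · -- Part (i): monotone recalibrations
    set S := {r : ℝ | ∃ h : ℝ → ℝ, Monotone h ∧ (∀ t, h t ∈ Icc (0:ℝ) 1) ∧
      r = Rst μ X Y (fun x => h (f x)) ystar} with hS
    have hne : S.Nonempty :=
      ⟨Rst μ X Y (fun x => (0:ℝ)) ystar,
        fun _ => 0, monotone_const, fun t => ⟨le_refl 0, zero_le_one⟩, rfl⟩
    have hforall : ∀ r ∈ S, Rst μ X Y f ystar - 2 * cutoffCE μ X Y f ≤ r := by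
      rintro r ⟨h, hmono, hh01, rfl⟩
      rw [sub_le_iff_le_add, ← sub_le_iff_le_add']
      set ψ : Ω → ℝ := fun ω => h (φ ω) with hψdef
      have hh : Measurable h := hmono.measurable
      have hψ : Measurable ψ := hh.comp hφ
      have hdiff : Rst μ X Y f ystar - Rst μ X Y (fun x => h (f x)) ystar
          = ∫ ω, ((if ystar < φ ω then (1:ℝ) else 0) - (if ystar < ψ ω then (1:ℝ) else 0))
              * (ystar - Y ω) ∂μ := by
        rw [hRst_eq, hRst_eq]
        exact Rgen_diff hY hY01 hφ hψ hystar
      set s : Ω → ℝ := fun ω =>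
        (if ystar < φ ω then (1:ℝ) else 0) - (if ystar < ψ ω then (1:ℝ) else 0) with hsdef
      have hs_meas : Measurable s := (meas_ind_lt hφ ystar).sub (meas_ind_lt hψ ystar)
      have hs_bd : ∀ ω, |s ω| ≤ 1 := fun ω => by
        simp only [hsdef]
        split_ifs <;> norm_num
      -- split
      have int_a : Integrable (fun ω => s ω * (ystar - φ ω)) μ := by
        refine integrable_of_bdd (C := 1)
          (hs_meas.mul (measurable_const.sub hφ)).aestronglyMeasurable fun ω => ?_
        have h2 : |ystar - φ ω| ≤ 1 := by rw [abs_sub_comm]; exact ymy_bd (hφ01 ω) hystar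
        exact prod2_bd (hs_bd ω) h2
      have int_b : Integrable (fun ω => s ω * (φ ω - Y ω)) μ := by
        refine integrable_of_bdd (C := 1)
          (hs_meas.mul (hφ.sub hY)).aestronglyMeasurable fun ω => ?_
        have h2 : |φ ω - Y ω| ≤ 1 := by rw [abs_sub_comm]; exact hYφ_bd ω
        exact prod2_bd (hs_bd ω) h2
      have hsum : (∫ ω, s ω * (ystar - Y ω) ∂μ)
          = (∫ ω, s ω * (ystar - φ ω) ∂μ) + ∫ ω, s ω * (φ ω - Y ω) ∂μ := by
        rw [← integral_add int_a int_b]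
        refine integral_congr_ae (Filter.Eventually.of_forall fun ω => ?_)
        simp only
        ring
      have term1 : (∫ ω, s ω * (ystar - φ ω) ∂μ) ≤ 0 := by
        refine integral_nonpos fun ω => ?_
        simp only [hsdef, Pi.zero_apply]
        by_cases hφm : ystar < φ ω <;> by_cases hψm : ystar < ψ ω
        · rw [if_pos hφm, if_pos hψm]; nlinarith
        · rw [if_pos hφm, if_neg hψm]; nlinarith
        · rw [if_neg hφm, if_pos hψm]; nlinarith [not_lt.mp hφm]
        · rw [if_neg hφm, if_neg hψm]; nlinarith
      -- the upward-closed set coming from monotonicity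
      set U : Set ℝ := {t : ℝ | ystar < h t} with hUdef
      have hUoc : U.OrdConnected := by
        constructor
        intro x hx y hy z hz
        exact lt_of_lt_of_le hx (hmono hz.1)
      have hUoc' : (U ∩ Icc (0:ℝ) 1).OrdConnected := hUoc.inter ordConnected_Icc
      have hUsub : (U ∩ Icc (0:ℝ) 1) ⊆ Icc 0 1 := inter_subset_right
      have hIoc_sub : Ioc ystar 1 ⊆ Icc (0:ℝ) 1 := fun x hx =>
        ⟨le_trans hystar.1 (le_of_lt hx.1), hx.2⟩
      have hrw : (fun ω => s ω * (φ ω - Y ω))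
          = fun ω => (Y ω - f (X ω)) * (U ∩ Icc 0 1).indicator (1 : ℝ → ℝ) (f (X ω))
              - (Y ω - f (X ω)) * (Ioc ystar 1).indicator (1 : ℝ → ℝ) (f (X ω)) := by
        funext ω
        have e1 : (Ioc ystar 1).indicator (1 : ℝ → ℝ) (f (X ω))
            = (if ystar < φ ω then (1:ℝ) else 0) := by
          by_cases hφm : ystar < φ ω
          · rw [Set.indicator_of_mem (show f (X ω) ∈ Ioc ystar 1 from ⟨hφm, (hφ01 ω).2⟩),
              if_pos hφm]; rfl
          · rw [Set.indicator_of_notMem (fun hc => hφm hc.1), if_neg hφm]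
        have e2 : (U ∩ Icc 0 1).indicator (1 : ℝ → ℝ) (f (X ω))
            = (if ystar < ψ ω then (1:ℝ) else 0) := by
          by_cases hψm : ystar < ψ ω
          · rw [Set.indicator_of_mem (show f (X ω) ∈ U ∩ Icc 0 1 from ⟨hψm, hφ01 ω⟩),
              if_pos hψm]; rfl
          · rw [Set.indicator_of_notMem (fun hc => hψm hc.1), if_neg hψm]
        rw [e1, e2]
        simp only [hsdef]
        ring
      have term2 : (∫ ω, s ω * (φ ω - Y ω) ∂μ) ≤ 2 * cutoffCE μ X Y f := by
        rw [hrw, integral_sub (int_ind _ hUoc'.measurableSet)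
          (int_ind _ measurableSet_Ioc)]
        have b1 := hcut_le (U ∩ Icc 0 1) hUsub hUoc'
        have b2 := hcut_le (Ioc ystar 1) hIoc_sub ordConnected_Ioc
        have c1 : (∫ ω, (Y ω - f (X ω)) * (U ∩ Icc 0 1).indicator (1 : ℝ → ℝ) (f (X ω)) ∂μ)
            ≤ cutoffCE μ X Y f := le_trans (le_abs_self _) b1
        have c2 : -(∫ ω, (Y ω - f (X ω)) * (Ioc ystar 1).indicator (1 : ℝ → ℝ) (f (X ω)) ∂μ)
            ≤ cutoffCE μ X Y f := le_trans (neg_le_abs _) b2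
        linarith
      rw [hdiff]
      simp only [hsdef] at hsum term1 term2 ⊢
      linarith
    have := le_csInf hne hforall
    linarith
  · -- Part (ii): measurable recalibrations vs ECE
    have hm : MeasurableSpace.comap (fun ω => f (X ω)) inferInstance
        ≤ ‹MeasurableSpace Ω› := hφ.comap_le
    have hYint : Integrable Y μ :=
      integrable_of_bdd (C := 1) hY.aestronglyMeasurable fun ω => by
        rw [abs_le]; exact ⟨by linarith [(hY01 ω).1], (hY01 ω).2⟩
    set g : Ω → ℝ := μ[Y | MeasurableSpace.comap (fun ω => f (X ω)) inferInstance] with hgdef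
    have hgint : Integrable g μ := integrable_condExp
    have hece : eceCE μ X Y f = ∫ ω, |g ω - φ ω| ∂μ := rfl
    have habs_int : Integrable (fun ω => |g ω - φ ω|) μ :=
      (hgint.sub (integrable_of_bdd (C := 1) hφ.aestronglyMeasurable fun ω => by
        rw [abs_le]; exact ⟨by linarith [(hφ01 ω).1], (hφ01 ω).2⟩)).abs
    set S := {r : ℝ | ∃ h : ℝ → ℝ, Measurable h ∧ (∀ t, h t ∈ Icc (0:ℝ) 1) ∧
      r = Rst μ X Y (fun x => h (f x)) ystar} with hS
    have hne : S.Nonempty :=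
      ⟨Rst μ X Y (fun x => (0:ℝ)) ystar,
        fun _ => 0, measurable_const, fun t => ⟨le_refl 0, zero_le_one⟩, rfl⟩
    have hforall : ∀ r ∈ S, Rst μ X Y f ystar - eceCE μ X Y f ≤ r := by
      rintro r ⟨h, hh, hh01, rfl⟩
      rw [sub_le_iff_le_add, ← sub_le_iff_le_add']
      set ψ : Ω → ℝ := fun ω => h (φ ω) with hψdef
      have hψ : Measurable ψ := hh.comp hφ
      have hdiff : Rst μ X Y f ystar - Rst μ X Y (fun x => h (f x)) ystar
          = ∫ ω, ((if ystar < φ ω then (1:ℝ) else 0) - (if ystar < ψ ω then (1:ℝ) else 0))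
              * (ystar - Y ω) ∂μ := by
        rw [hRst_eq, hRst_eq]
        exact Rgen_diff hY hY01 hφ hψ hystar
      set s : Ω → ℝ := fun ω =>
        (if ystar < φ ω then (1:ℝ) else 0) - (if ystar < ψ ω then (1:ℝ) else 0) with hsdef
      have hs_meas : Measurable s := (meas_ind_lt hφ ystar).sub (meas_ind_lt hψ ystar)
      have hs_bd : ∀ ω, |s ω| ≤ 1 := fun ω => by
        simp only [hsdef]
        split_ifs <;> norm_num
      -- m-measurable sets
      have hA : MeasurableSet[MeasurableSpace.comap (fun ω => f (X ω)) inferInstance]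
          {ω | ystar < φ ω} := ⟨Ioi ystar, measurableSet_Ioi, rfl⟩
      have hB : MeasurableSet[MeasurableSpace.comap (fun ω => f (X ω)) inferInstance]
          {ω | ystar < ψ ω} := ⟨h ⁻¹' (Ioi ystar), hh measurableSet_Ioi, rfl⟩
      -- ∫ s·(g - Y) = 0
      have key : (∫ ω, s ω * (g ω - Y ω) ∂μ) = 0 := by
        have hgY : Integrable (fun ω => g ω - Y ω) μ := hgint.sub hYint
        have hindA : Integrable ({ω | ystar < φ ω}.indicator fun ω => g ω - Y ω) μ :=
          hgY.indicator (hm _ hA)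
        have hindB : Integrable ({ω | ystar < ψ ω}.indicator fun ω => g ω - Y ω) μ :=
          hgY.indicator (hm _ hB)
        have hptw : (fun ω => s ω * (g ω - Y ω))
            = fun ω => ({ω | ystar < φ ω}.indicator (fun ω => g ω - Y ω) ω)
                - ({ω | ystar < ψ ω}.indicator (fun ω => g ω - Y ω) ω) := by
          funext ω
          by_cases hφm : ystar < φ ω <;> by_cases hψm : ystar < ψ ω <;>
            simp [hsdef, hφm, hψm, Set.indicator_apply] <;> ring
        rw [hptw, integral_sub hindA hindB,
          integral_indicator (hm _ hA), integral_indicator (hm _ hB)]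
        have hAzero : (∫ ω in {ω | ystar < φ ω}, (g ω - Y ω) ∂μ) = 0 := by
          rw [integral_sub hgint.integrableOn hYint.integrableOn,
            setIntegral_condExp hm hYint hA, sub_self]
        have hBzero : (∫ ω in {ω | ystar < ψ ω}, (g ω - Y ω) ∂μ) = 0 := by
          rw [integral_sub hgint.integrableOn hYint.integrableOn,
            setIntegral_condExp hm hYint hB, sub_self]
        rw [hAzero, hBzero, sub_self]
      have hsY_int : Integrable (fun ω => s ω * (ystar - Y ω)) μ := by
        refine integrable_of_bdd (C := 1)
          (hs_meas.mul (measurable_const.sub hY)).aestronglyMeasurable fun ω => ?_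
        have h2 : |ystar - Y ω| ≤ 1 := by rw [abs_sub_comm]; exact ymy_bd (hY01 ω) hystar
        exact prod2_bd (hs_bd ω) h2
      have hsg_int : Integrable (fun ω => s ω * (ystar - g ω)) μ := by
        have := (Integrable.bdd_mul ((integrable_const (ystar : ℝ)).sub hgint)
          hs_meas.aestronglyMeasurable (Filter.Eventually.of_forall fun ω => (by
            simpa [Real.norm_eq_abs] using hs_bd ω : ‖s ω‖ ≤ 1)))
        simpa using this
      have hsgY_int : Integrable (fun ω => s ω * (g ω - Y ω)) μ := by
        have := Integrable.bdd_mul (hgint.sub hYint)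
          hs_meas.aestronglyMeasurable (Filter.Eventually.of_forall fun ω => (by
            simpa [Real.norm_eq_abs] using hs_bd ω : ‖s ω‖ ≤ 1))
        simpa using this
      have step1 : (∫ ω, s ω * (ystar - Y ω) ∂μ) = ∫ ω, s ω * (ystar - g ω) ∂μ := by
        have hpt : (fun ω => s ω * (ystar - Y ω))
            = fun ω => s ω * (ystar - g ω) + s ω * (g ω - Y ω) := by
          funext ω; ring
        rw [hpt, integral_add hsg_int hsgY_int, key, add_zero]
      have hptbd : ∀ ω, s ω * (ystar - g ω) ≤ |g ω - φ ω| := by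
        intro ω
        simp only [hsdef]
        by_cases hφm : ystar < φ ω <;> by_cases hψm : ystar < ψ ω
        · rw [if_pos hφm, if_pos hψm]
          simpa using abs_nonneg (g ω - φ ω)
        · -- s = 1 : ystar < φ ω
          rw [if_pos hφm, if_neg hψm]
          have habs : φ ω - g ω ≤ |g ω - φ ω| := by
            rw [abs_sub_comm]; exact le_abs_self _
          have : (1 - 0 : ℝ) * (ystar - g ω) = ystar - g ω := by ring
          rw [this]
          linarith
        · -- s = -1 : φ ω ≤ ystar
          rw [if_neg hφm, if_pos hψm]
          have hφle : φ ω ≤ ystar := not_lt.mp hφm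
          have habs : g ω - φ ω ≤ |g ω - φ ω| := le_abs_self _
          have : (0 - 1 : ℝ) * (ystar - g ω) = g ω - ystar := by ring
          rw [this]
          linarith
        · rw [if_neg hφm, if_neg hψm]
          simpa using abs_nonneg (g ω - φ ω)
      have step2 : (∫ ω, s ω * (ystar - g ω) ∂μ) ≤ ∫ ω, |g ω - φ ω| ∂μ :=
        integral_mono hsg_int habs_int hptbd
      rw [hdiff, hece]
      simp only [hsdef] at step1 step2 ⊢
      linarith
    have := le_csInf hne hforall
    linarith
end

section
/- Suppose Y ∈ {0,1} and ℓ: {0,1} × [0,1] → ℝ admits a Schervish representation with a probability measure ν on [0,1], i.e., ℓ(y, q) = ∫ ℓ_bd(y, 1{q ≥ τ}; τ) dν(τ) for all y ∈ {0,1} and q ∈ [0,1]. Then for any measurable forecast f: 𝒳 → [0,1]: (i) E[ℓ(Y, f(X))] − inf over all measurable h: [0,1] → [0,1] of E[ℓ(Y, h(f(X)))] ≤ Δ_ECE(f); and (ii) E[ℓ(Y, f(X))] − inf over all monotone non-decreasing h: [0,1] → [0,1] of E[ℓ(Y, h(f(X)))] ≤ 2·Δ_Cutoff(f). -/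
open MeasureTheory Set

/-- The binary decision loss `ℓ_bd(y, ŷ; τ) = τ(1−y)ŷ + (1−τ)y(1−ŷ)`. -/
noncomputable def lbd (y yhat τ : ℝ) : ℝ := τ * (1 - y) * yhat + (1 - τ) * y * (1 - yhat)

lemma abs_lbd_ite_le {y τ : ℝ} (hy : y = 0 ∨ y = 1) (hτ : τ ∈ Icc (0:ℝ) 1) (c : Prop) [Decidable c] :
    |lbd y (if c then (1:ℝ) else 0) τ| ≤ 1 := by
  obtain ⟨h0, h1⟩ := hτ
  rcases hy with rfl | rfl <;> split <;>
    (simp only [lbd]; rw [abs_le]; constructor <;> nlinarith)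

lemma integrable_of_bdd_s8 {Ω : Type*} [MeasurableSpace Ω] {μ : Measure Ω} [IsFiniteMeasure μ]
    {φ : Ω → ℝ} {C : ℝ} (hm : AEStronglyMeasurable φ μ) (hb : ∀ ω, |φ ω| ≤ C) :
    Integrable φ μ :=
  Integrable.mono' (integrable_const C) hm (Filter.Eventually.of_forall fun ω => by
    rw [Real.norm_eq_abs]; exact hb ω)

lemma abs_int_le {Ω : Type*} [MeasurableSpace Ω] (μ : Measure Ω) (φ : Ω → ℝ) :
    |∫ ω, φ ω ∂μ| ≤ ∫ ω, |φ ω| ∂μ := by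
  simpa [Real.norm_eq_abs] using norm_integral_le_integral_norm (μ := μ) φ

noncomputable def mSub {Ω 𝒳 : Type*} [MeasurableSpace 𝒳] (X : Ω → 𝒳) (f : 𝒳 → ℝ) :
    MeasurableSpace Ω :=
  MeasurableSpace.comap (fun ω => f (X ω)) inferInstance

/-- If `ℓ` admits a Schervish representation
`ℓ(y, q) = ∫ ℓ_bd(y, 1{q ≥ τ}; τ) dν(τ)` for a probability measure `ν` on `[0,1]`, then
(i) the unconstrained risk gap is at most `Δ_ECE(f)` and (ii) the monotone risk gap is at
most `2·Δ_Cutoff(f)`. -/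
theorem schervish_risk_gaps {Ω 𝒳 : Type*} [MeasurableSpace Ω] [MeasurableSpace 𝒳]
    (μ : Measure Ω) [IsProbabilityMeasure μ]
    (X : Ω → 𝒳) (Y : Ω → ℝ) (f : 𝒳 → ℝ)
    (hX : Measurable X) (hY : Measurable Y) (hf : Measurable f)
    (hYbin : ∀ ω, Y ω = 0 ∨ Y ω = 1) (hf01 : ∀ x, f x ∈ Icc (0:ℝ) 1)
    (ν : Measure ℝ) [IsProbabilityMeasure ν] (hν : ν (Icc (0:ℝ) 1)ᶜ = 0)
    (ℓ : ℝ → ℝ → ℝ)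
    (hrep : ∀ y ∈ ({0, 1} : Set ℝ), ∀ q ∈ Icc (0:ℝ) 1,
      ℓ y q = ∫ τ, lbd y (if τ ≤ q then (1:ℝ) else 0) τ ∂ν) :
    ((∫ ω, ℓ (Y ω) (f (X ω)) ∂μ) -
        sInf {r : ℝ | ∃ h : ℝ → ℝ, Measurable h ∧ (∀ t, h t ∈ Icc (0:ℝ) 1) ∧
          r = ∫ ω, ℓ (Y ω) (h (f (X ω))) ∂μ}
      ≤ eceCE μ X Y f) ∧
    ((∫ ω, ℓ (Y ω) (f (X ω)) ∂μ) -
        sInf {r : ℝ | ∃ h : ℝ → ℝ, Monotone h ∧ (∀ t, h t ∈ Icc (0:ℝ) 1) ∧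
          r = ∫ ω, ℓ (Y ω) (h (f (X ω))) ∂μ}
      ≤ 2 * cutoffCE μ X Y f) := by
    classical
  have hg : Measurable (fun ω => f (X ω)) := hf.comp hX
  set g : Ω → ℝ := fun ω => f (X ω) with hg_def
  have hg01 : ∀ ω, g ω ∈ Icc (0:ℝ) 1 := fun ω => hf01 (X ω)
  have hYmem : ∀ ω, Y ω ∈ ({0, 1} : Set ℝ) := fun ω => by
    rcases hYbin ω with h | h <;> simp [h]
  have hYabs : ∀ ω, |Y ω| ≤ 1 := fun ω => by rcases hYbin ω with h | h <;> simp [h]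
  have hYint : Integrable Y μ := integrable_of_bdd_s8 hY.aestronglyMeasurable hYabs
  have hgint : Integrable g μ := integrable_of_bdd_s8 hg.aestronglyMeasurable
    (fun ω => abs_le.2 ⟨by linarith [(hg01 ω).1], (hg01 ω).2⟩)
  have hτae : ∀ᵐ τ ∂ν, τ ∈ Icc (0:ℝ) 1 := by
    rw [ae_iff]
    exact hν
  -- a.e. bound on the product
  have hτae2 : ∀ᵐ p : Ω × ℝ ∂μ.prod ν, p.2 ∈ Icc (0:ℝ) 1 := by
    rw [ae_iff]
    have he : {p : Ω × ℝ | ¬ p.2 ∈ Icc (0:ℝ) 1} = (univ : Set Ω) ×ˢ (Icc (0:ℝ) 1)ᶜ := by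
      ext p; simp
    rw [he, Measure.prod_prod, hν, mul_zero]
  -- measurability of the lbd integrand on the product, for any measurable post-processing k
  have hDmeas : ∀ k : Ω → ℝ, Measurable k →
      Measurable (fun p : Ω × ℝ => lbd (Y p.1) (if p.2 ≤ k p.1 then (1:ℝ) else 0) p.2) := by
    intro k hk
    have he : (fun p : Ω × ℝ => lbd (Y p.1) (if p.2 ≤ k p.1 then (1:ℝ) else 0) p.2)
        = fun p : Ω × ℝ => if p.2 ≤ k p.1 then lbd (Y p.1) 1 p.2 else lbd (Y p.1) 0 p.2 := by
      funext p; exact apply_ite (fun z => lbd (Y p.1) z p.2) _ _ _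
    rw [he]
    refine Measurable.ite (measurableSet_le measurable_snd (hk.comp measurable_fst)) ?_ ?_ <;>
      (unfold lbd; fun_prop)
  have hDint : ∀ k : Ω → ℝ, Measurable k →
      Integrable (fun p : Ω × ℝ => lbd (Y p.1) (if p.2 ≤ k p.1 then (1:ℝ) else 0) p.2) (μ.prod ν) := by
    intro k hk
    refine Integrable.mono' (integrable_const 1) ((hDmeas k hk).aestronglyMeasurable) ?_
    filter_upwards [hτae2] with p hp
    rw [Real.norm_eq_abs]
    exact abs_lbd_ite_le (hYbin p.1) hp _
  -- per-ω integrability in τ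
  have hτint : ∀ (y q : ℝ), (y = 0 ∨ y = 1) →
      Integrable (fun τ => lbd y (if τ ≤ q then (1:ℝ) else 0) τ) ν := by
    intro y q hy
    have hmeas : Measurable (fun τ => lbd y (if τ ≤ q then (1:ℝ) else 0) τ) := by
      have he : (fun τ => lbd y (if τ ≤ q then (1:ℝ) else 0) τ)
          = fun τ => if τ ≤ q then lbd y 1 τ else lbd y 0 τ := by
        funext τ; exact apply_ite (fun z => lbd y z τ) _ _ _
      rw [he]
      refine Measurable.ite measurableSet_Iic ?_ ?_ <;> (unfold lbd; fun_prop)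
    refine Integrable.mono' (integrable_const 1) hmeas.aestronglyMeasurable ?_
    filter_upwards [hτae] with τ hτ
    rw [Real.norm_eq_abs]
    exact abs_lbd_ite_le hy hτ _
  -- the main gap identity
  have main : ∀ h : ℝ → ℝ, Measurable h → (∀ t, h t ∈ Icc (0:ℝ) 1) →
      ((∫ ω, ℓ (Y ω) (g ω) ∂μ) - (∫ ω, ℓ (Y ω) (h (g ω)) ∂μ)
        = ∫ τ, (∫ ω, ((if τ ≤ g ω then (1:ℝ) else 0) - (if τ ≤ h (g ω) then (1:ℝ) else 0))
            * (τ - Y ω) ∂μ) ∂ν)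
      ∧ Integrable (fun τ => ∫ ω, ((if τ ≤ g ω then (1:ℝ) else 0)
            - (if τ ≤ h (g ω) then (1:ℝ) else 0)) * (τ - Y ω) ∂μ) ν := by
    intro h hh hh01
    have hhg : Measurable (fun ω => h (g ω)) := hh.comp hg
    have hI1 := hDint g hg
    have hI2 := hDint (fun ω => h (g ω)) hhg
    have hpt1 : ∀ ω, ℓ (Y ω) (g ω) = ∫ τ, lbd (Y ω) (if τ ≤ g ω then (1:ℝ) else 0) τ ∂ν :=
      fun ω => hrep _ (hYmem ω) _ (hg01 ω)
    have hpt2 : ∀ ω, ℓ (Y ω) (h (g ω)) = ∫ τ, lbd (Y ω) (if τ ≤ h (g ω) then (1:ℝ) else 0) τ ∂ν :=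
      fun ω => hrep _ (hYmem ω) _ (hh01 (g ω))
    have hId : Integrable (fun p : Ω × ℝ =>
        ((if p.2 ≤ g p.1 then (1:ℝ) else 0) - (if p.2 ≤ h (g p.1) then (1:ℝ) else 0))
          * (p.2 - Y p.1)) (μ.prod ν) := by
      have he : (fun p : Ω × ℝ =>
          ((if p.2 ≤ g p.1 then (1:ℝ) else 0) - (if p.2 ≤ h (g p.1) then (1:ℝ) else 0))
            * (p.2 - Y p.1))
          = fun p : Ω × ℝ => lbd (Y p.1) (if p.2 ≤ g p.1 then (1:ℝ) else 0) p.2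
              - lbd (Y p.1) (if p.2 ≤ h (g p.1) then (1:ℝ) else 0) p.2 := by
        funext p; simp only [lbd]; ring
      rw [he]; exact hI1.sub hI2
    constructor
    · have e1 : (∫ ω, ℓ (Y ω) (g ω) ∂μ) - (∫ ω, ℓ (Y ω) (h (g ω)) ∂μ)
          = ∫ ω, (∫ τ, lbd (Y ω) (if τ ≤ g ω then (1:ℝ) else 0) τ ∂ν)
              - (∫ τ, lbd (Y ω) (if τ ≤ h (g ω) then (1:ℝ) else 0) τ ∂ν) ∂μ := by
        simp only [hpt1, hpt2]
        exact (integral_sub hI1.integral_prod_left hI2.integral_prod_left).symm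
      rw [e1]
      have e2 : ∀ ω, (∫ τ, lbd (Y ω) (if τ ≤ g ω then (1:ℝ) else 0) τ ∂ν)
            - (∫ τ, lbd (Y ω) (if τ ≤ h (g ω) then (1:ℝ) else 0) τ ∂ν)
          = ∫ τ, ((if τ ≤ g ω then (1:ℝ) else 0) - (if τ ≤ h (g ω) then (1:ℝ) else 0))
              * (τ - Y ω) ∂ν := by
        intro ω
        rw [← integral_sub (hτint _ _ (hYbin ω)) (hτint _ _ (hYbin ω))]
        congr 1
        funext τ
        simp only [lbd]; ring
      calc ∫ ω, (∫ τ, lbd (Y ω) (if τ ≤ g ω then (1:ℝ) else 0) τ ∂ν)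
              - (∫ τ, lbd (Y ω) (if τ ≤ h (g ω) then (1:ℝ) else 0) τ ∂ν) ∂μ
          = ∫ ω, ∫ τ, ((if τ ≤ g ω then (1:ℝ) else 0) - (if τ ≤ h (g ω) then (1:ℝ) else 0))
              * (τ - Y ω) ∂ν ∂μ := by
            congr 1; funext ω; exact e2 ω
        _ = ∫ τ, ∫ ω, ((if τ ≤ g ω then (1:ℝ) else 0) - (if τ ≤ h (g ω) then (1:ℝ) else 0))
              * (τ - Y ω) ∂μ ∂ν := integral_integral_swap hId
    · exact hId.integral_prod_right
    -- conditional expectation setup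
  have hm : mSub X f ≤ (inferInstance : MeasurableSpace Ω) := hg.comap_le
  set π : Ω → ℝ := μ[Y | mSub X f] with hπ_def
  have hπint : Integrable π μ := integrable_condExp
  have hece_absint : Integrable (fun ω => |π ω - g ω|) μ := (hπint.sub hgint).abs
  have hece_eq : eceCE μ X Y f = ∫ ω, |π ω - g ω| ∂μ := rfl
  -- part (i): per-τ bound for measurable post-processings
  have part1 : ∀ h : ℝ → ℝ, Measurable h → (∀ t, h t ∈ Icc (0:ℝ) 1) → ∀ τ : ℝ,
      (∫ ω, ((if τ ≤ g ω then (1:ℝ) else 0) - (if τ ≤ h (g ω) then (1:ℝ) else 0))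
          * (τ - Y ω) ∂μ) ≤ eceCE μ X Y f := by
    intro h hh hh01 τ
    set φ : Ω → ℝ := fun ω =>
      (if τ ≤ g ω then (1:ℝ) else 0) - (if τ ≤ h (g ω) then (1:ℝ) else 0) with hφ_def
    have hφbd : ∀ ω, |φ ω| ≤ 2 := by
      intro ω; simp only [hφ_def]; split_ifs <;> norm_num
    have hA : MeasurableSet[mSub X f] {ω | τ ≤ g ω} := ⟨Ici τ, measurableSet_Ici, rfl⟩
    have hB : MeasurableSet[mSub X f] {ω | τ ≤ h (g ω)} := ⟨h ⁻¹' Ici τ, hh measurableSet_Ici, rfl⟩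
    have hφm : StronglyMeasurable[mSub X f] φ :=
      Measurable.stronglyMeasurable
        ((Measurable.ite hA measurable_const measurable_const).sub
          (Measurable.ite hB measurable_const measurable_const))
    have hφmeas : Measurable φ :=
      (Measurable.ite (measurableSet_le measurable_const hg) measurable_const
          measurable_const).sub
        (Measurable.ite (measurableSet_le measurable_const (hh.comp hg)) measurable_const
          measurable_const)
    have hφasm : AEStronglyMeasurable φ μ := hφmeas.aestronglyMeasurable
    have hbdd2 : ∀ᵐ ω ∂μ, ‖φ ω‖ ≤ 2 :=
      Filter.Eventually.of_forall fun ω => by rw [Real.norm_eq_abs]; exact hφbd ω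
    have key := condExp_stronglyMeasurable_mul_of_bound hm hφm hYint 2
      (Filter.Eventually.of_forall fun ω => by rw [Real.norm_eq_abs]; exact hφbd ω)
    have hkey : ∫ ω, φ ω * Y ω ∂μ = ∫ ω, φ ω * π ω ∂μ :=
      calc ∫ ω, φ ω * Y ω ∂μ = ∫ ω, (μ[(φ * Y)|mSub X f]) ω ∂μ := (integral_condExp hm).symm
        _ = ∫ ω, φ ω * π ω ∂μ := integral_congr_ae key
    have hφτint : Integrable (fun ω => φ ω * τ) μ := (integrable_const τ).bdd_mul hφasm hbdd2
    have hφYint : Integrable (fun ω => φ ω * Y ω) μ := hYint.bdd_mul hφasm hbdd2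
    have hφπint : Integrable (fun ω => φ ω * π ω) μ := hπint.bdd_mul hφasm hbdd2
    have hφτπint : Integrable (fun ω => φ ω * (τ - π ω)) μ :=
      ((integrable_const τ).sub hπint).bdd_mul hφasm hbdd2
    have step1 : ∫ ω, φ ω * (τ - Y ω) ∂μ = ∫ ω, φ ω * (τ - π ω) ∂μ := by
      have e1 : (fun ω => φ ω * (τ - Y ω)) = fun ω => φ ω * τ - φ ω * Y ω :=
        funext fun ω => by ring
      have e2 : (fun ω => φ ω * (τ - π ω)) = fun ω => φ ω * τ - φ ω * π ω :=
        funext fun ω => by ring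
      rw [e1, e2, integral_sub hφτint hφYint, integral_sub hφτint hφπint, hkey]
    have ptwise : ∀ ω, φ ω * (τ - π ω) ≤ |π ω - g ω| := by
      intro ω
      have h2 : g ω - π ω ≤ |π ω - g ω| := (le_abs_self _).trans_eq (abs_sub_comm _ _)
      have h1 : π ω - g ω ≤ |π ω - g ω| := le_abs_self _
      have h0 : (0:ℝ) ≤ |π ω - g ω| := abs_nonneg _
      simp only [hφ_def]
      split_ifs with hc1 hc2 hc2
      · nlinarith
      · push_neg at hc2; nlinarith
      · push_neg at hc1; nlinarith
      · nlinarith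
    calc ∫ ω, φ ω * (τ - Y ω) ∂μ = ∫ ω, φ ω * (τ - π ω) ∂μ := step1
      _ ≤ ∫ ω, |π ω - g ω| ∂μ := integral_mono hφτπint hece_absint ptwise
      _ = eceCE μ X Y f := hece_eq.symm
  -- part (ii): per-τ bound for monotone post-processings
  have part2 : ∀ h : ℝ → ℝ, Monotone h → ∀ τ : ℝ,
      (∫ ω, ((if τ ≤ g ω then (1:ℝ) else 0) - (if τ ≤ h (g ω) then (1:ℝ) else 0))
          * (τ - Y ω) ∂μ) ≤ 2 * cutoffCE μ X Y f := by
    intro h hmono τ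
    have hh : Measurable h := hmono.measurable
    set S : Set ℝ := {p | τ ≤ h p} with hS_def
    have hSmeas : MeasurableSet S := measurableSet_le measurable_const hh
    set I₁ : Set ℝ := (Ici τ ∩ Sᶜ) ∩ Icc 0 1 with hI1_def
    set I₂ : Set ℝ := (S ∩ Iio τ) ∩ Icc 0 1 with hI2_def
    have hI1meas : MeasurableSet I₁ := (measurableSet_Ici.inter hSmeas.compl).inter measurableSet_Icc
    have hI2meas : MeasurableSet I₂ := (hSmeas.inter measurableSet_Iio).inter measurableSet_Icc
    have hI1sub : I₁ ⊆ Icc 0 1 := inter_subset_right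
    have hI2sub : I₂ ⊆ Icc 0 1 := inter_subset_right
    have hSord : OrdConnected Sᶜ := by
      constructor; intro x _hx y hy z hz
      simp only [hS_def, mem_compl_iff, mem_setOf_eq, not_le] at hy ⊢
      exact lt_of_le_of_lt (hmono hz.2) hy
    have hSord2 : OrdConnected S := by
      constructor; intro x hx y _hy z hz
      simp only [hS_def, mem_setOf_eq] at hx ⊢
      exact hx.trans (hmono hz.1)
    have hI1ord : I₁.OrdConnected := (Set.ordConnected_Ici.inter hSord).inter Set.ordConnected_Icc
    have hI2ord : I₂.OrdConnected := (hSord2.inter Set.ordConnected_Iio).inter Set.ordConnected_Icc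
    have hsup : ∀ (I : Set ℝ), I ⊆ Icc 0 1 → I.OrdConnected →
        |∫ ω, (Y ω - g ω) * I.indicator (1 : ℝ → ℝ) (g ω) ∂μ| ≤ cutoffCE μ X Y f := by
      intro I hI hIc
      have hbdd : BddAbove (Set.range fun J : {J : Set ℝ // J ⊆ Icc 0 1 ∧ J.OrdConnected} =>
          |∫ ω, (Y ω - g ω) * J.1.indicator (1 : ℝ → ℝ) (g ω) ∂μ|) := by
        refine ⟨1, ?_⟩
        rintro x ⟨J, rfl⟩
        refine le_trans (abs_int_le μ _) ?_
        have hle : ∀ ω, |(Y ω - g ω) * J.1.indicator (1 : ℝ → ℝ) (g ω)| ≤ 1 := by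
          intro ω
          rw [abs_mul]
          have h1 : |Y ω - g ω| ≤ 1 := by
            rcases hYbin ω with hy | hy <;> rw [hy] <;> rw [abs_le] <;>
              exact ⟨by linarith [(hg01 ω).2], by linarith [(hg01 ω).1]⟩
          have h2 : |J.1.indicator (1 : ℝ → ℝ) (g ω)| ≤ 1 := by
            rw [indicator_apply]; split <;> simp
          nlinarith [abs_nonneg (Y ω - g ω), abs_nonneg (J.1.indicator (1:ℝ→ℝ) (g ω))]
        calc ∫ ω, |(Y ω - g ω) * J.1.indicator (1:ℝ→ℝ) (g ω)| ∂μ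
            ≤ ∫ _ω, (1:ℝ) ∂μ := integral_mono_of_nonneg
                (Filter.Eventually.of_forall fun ω => abs_nonneg _)
                (integrable_const 1) (Filter.Eventually.of_forall hle)
          _ = 1 := by simp
      exact le_ciSup hbdd (⟨I, hI, hIc⟩ : {J : Set ℝ // J ⊆ Icc 0 1 ∧ J.OrdConnected})
    have hindint : ∀ (I : Set ℝ), MeasurableSet I → ∀ (ψ : Ω → ℝ), Integrable ψ μ →
        Integrable (fun ω => I.indicator (1:ℝ→ℝ) (g ω) * ψ ω) μ := fun I hI ψ hψ =>
      hψ.bdd_mul (c := 1) (((measurable_one.indicator hI).comp hg).aestronglyMeasurable)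
        (Filter.Eventually.of_forall fun ω => by rw [Real.norm_eq_abs, indicator_apply]; split <;> simp)
    have hg_mem1 : ∀ ω, (g ω ∈ I₁ ↔ (τ ≤ g ω ∧ ¬ τ ≤ h (g ω))) := by
      intro ω
      simp only [hI1_def, hS_def, mem_inter_iff, mem_Ici, mem_compl_iff, mem_setOf_eq]
      exact ⟨fun ⟨⟨a, b⟩, _⟩ => ⟨a, b⟩, fun ⟨a, b⟩ => ⟨⟨a, b⟩, hg01 ω⟩⟩
    have hg_mem2 : ∀ ω, (g ω ∈ I₂ ↔ (τ ≤ h (g ω) ∧ ¬ τ ≤ g ω)) := by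
      intro ω
      simp only [hI2_def, hS_def, mem_inter_iff, mem_Iio, mem_setOf_eq, ← not_le]
      exact ⟨fun ⟨⟨a, b⟩, _⟩ => ⟨a, b⟩, fun ⟨a, b⟩ => ⟨⟨a, b⟩, hg01 ω⟩⟩
    have hsplit : ∀ ω, ((if τ ≤ g ω then (1:ℝ) else 0) - (if τ ≤ h (g ω) then (1:ℝ) else 0))
          * (τ - Y ω)
        = I₁.indicator (1:ℝ→ℝ) (g ω) * (τ - Y ω) - I₂.indicator (1:ℝ→ℝ) (g ω) * (τ - Y ω) := by
      intro ω
      rw [indicator_apply, indicator_apply]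
      by_cases h1 : τ ≤ g ω <;> by_cases h2 : τ ≤ h (g ω) <;>
        simp [hg_mem1 ω, hg_mem2 ω, h1, h2]
    have hT1 : ∫ ω, I₁.indicator (1:ℝ→ℝ) (g ω) * (τ - Y ω) ∂μ ≤ cutoffCE μ X Y f := by
      have hdec : (fun ω => I₁.indicator (1:ℝ→ℝ) (g ω) * (τ - Y ω))
          = fun ω => I₁.indicator (1:ℝ→ℝ) (g ω) * (τ - g ω)
              - I₁.indicator (1:ℝ→ℝ) (g ω) * (Y ω - g ω) := funext fun ω => by ring
      rw [hdec, integral_sub (hindint _ hI1meas (fun ω => τ - g ω) ((integrable_const τ).sub hgint))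
        (hindint _ hI1meas (fun ω => Y ω - g ω) (hYint.sub hgint))]
      have hs1 : ∫ ω, I₁.indicator (1:ℝ→ℝ) (g ω) * (τ - g ω) ∂μ ≤ 0 := by
        apply integral_nonpos
        intro ω
        show I₁.indicator (1:ℝ→ℝ) (g ω) * (τ - g ω) ≤ (0:ℝ)
        rw [indicator_apply]
        split
        · next hmem =>
            have := ((hg_mem1 ω).1 hmem).1
            simp only [Pi.one_apply, one_mul]
            linarith
        · simp
      have hs2 : - ∫ ω, I₁.indicator (1:ℝ→ℝ) (g ω) * (Y ω - g ω) ∂μ ≤ cutoffCE μ X Y f := by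
        have he : ∫ ω, I₁.indicator (1:ℝ→ℝ) (g ω) * (Y ω - g ω) ∂μ
            = ∫ ω, (Y ω - g ω) * I₁.indicator (1:ℝ→ℝ) (g ω) ∂μ := by
          congr 1; funext ω; ring
        rw [he]
        exact le_trans (neg_le_abs _) (hsup I₁ hI1sub hI1ord)
      linarith
    have hT2 : - ∫ ω, I₂.indicator (1:ℝ→ℝ) (g ω) * (τ - Y ω) ∂μ ≤ cutoffCE μ X Y f := by
      have he : - ∫ ω, I₂.indicator (1:ℝ→ℝ) (g ω) * (τ - Y ω) ∂μ
          = ∫ ω, I₂.indicator (1:ℝ→ℝ) (g ω) * (g ω - τ)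
              + (Y ω - g ω) * I₂.indicator (1:ℝ→ℝ) (g ω) ∂μ := by
        rw [← integral_neg]; congr 1; funext ω; ring
      rw [he, integral_add (hindint _ hI2meas (fun ω => g ω - τ) (hgint.sub (integrable_const τ)))
        (by
          have := hindint I₂ hI2meas (fun ω => Y ω - g ω) (hYint.sub hgint)
          have he2 : (fun ω => (Y ω - g ω) * I₂.indicator (1:ℝ→ℝ) (g ω))
              = fun ω => I₂.indicator (1:ℝ→ℝ) (g ω) * (Y ω - g ω) := funext fun ω => by ring
          rw [he2]; exact this)]
      have hs1 : ∫ ω, I₂.indicator (1:ℝ→ℝ) (g ω) * (g ω - τ) ∂μ ≤ 0 := by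
        apply integral_nonpos
        intro ω
        show I₂.indicator (1:ℝ→ℝ) (g ω) * (g ω - τ) ≤ (0:ℝ)
        rw [indicator_apply]
        split
        · next hmem =>
            have := ((hg_mem2 ω).1 hmem).2
            push_neg at this
            simp only [Pi.one_apply, one_mul]
            linarith
        · simp
      have hs2 : ∫ ω, (Y ω - g ω) * I₂.indicator (1:ℝ→ℝ) (g ω) ∂μ ≤ cutoffCE μ X Y f :=
        le_trans (le_abs_self _) (hsup I₂ hI2sub hI2ord)
      linarith
    calc ∫ ω, ((if τ ≤ g ω then (1:ℝ) else 0) - (if τ ≤ h (g ω) then (1:ℝ) else 0))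
            * (τ - Y ω) ∂μ
        = ∫ ω, I₁.indicator (1:ℝ→ℝ) (g ω) * (τ - Y ω)
            - I₂.indicator (1:ℝ→ℝ) (g ω) * (τ - Y ω) ∂μ := by
          congr 1; funext ω; exact hsplit ω
      _ = (∫ ω, I₁.indicator (1:ℝ→ℝ) (g ω) * (τ - Y ω) ∂μ)
            - ∫ ω, I₂.indicator (1:ℝ→ℝ) (g ω) * (τ - Y ω) ∂μ :=
          integral_sub (hindint _ hI1meas (fun ω => τ - Y ω) ((integrable_const τ).sub hYint))
            (hindint _ hI2meas (fun ω => τ - Y ω) ((integrable_const τ).sub hYint))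
      _ ≤ 2 * cutoffCE μ X Y f := by linarith
  -- assembly
  have h₀meas : Measurable (fun t : ℝ => max 0 (min 1 t)) :=
    measurable_const.max (measurable_const.min measurable_id)
  have h₀mono : Monotone (fun t : ℝ => max 0 (min 1 t)) :=
    fun a b hab => max_le_max le_rfl (min_le_min le_rfl hab)
  have h₀01 : ∀ t : ℝ, max 0 (min 1 t) ∈ Icc (0:ℝ) 1 :=
    fun t => ⟨le_max_left _ _, max_le zero_le_one (min_le_left _ _)⟩
  constructor
  · have hne : Set.Nonempty {r : ℝ | ∃ h : ℝ → ℝ, Measurable h ∧ (∀ t, h t ∈ Icc (0:ℝ) 1) ∧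
        r = ∫ ω, ℓ (Y ω) (h (f (X ω))) ∂μ} :=
      ⟨_, fun t => max 0 (min 1 t), h₀meas, h₀01, rfl⟩
    have hlow : ∀ r ∈ {r : ℝ | ∃ h : ℝ → ℝ, Measurable h ∧ (∀ t, h t ∈ Icc (0:ℝ) 1) ∧
        r = ∫ ω, ℓ (Y ω) (h (f (X ω))) ∂μ},
        (∫ ω, ℓ (Y ω) (g ω) ∂μ) - eceCE μ X Y f ≤ r := by
      rintro r ⟨h, hhm, hh01, rfl⟩
      obtain ⟨eq1, int1⟩ := main h hhm hh01
      have hle : (∫ ω, ℓ (Y ω) (g ω) ∂μ) - (∫ ω, ℓ (Y ω) (h (g ω)) ∂μ) ≤ eceCE μ X Y f := by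
        rw [eq1]
        calc _ ≤ ∫ _τ, eceCE μ X Y f ∂ν :=
              integral_mono int1 (integrable_const _) (fun τ => part1 h hhm hh01 τ)
          _ = eceCE μ X Y f := by simp
      linarith
    have := le_csInf hne hlow
    linarith
  · have hne : Set.Nonempty {r : ℝ | ∃ h : ℝ → ℝ, Monotone h ∧ (∀ t, h t ∈ Icc (0:ℝ) 1) ∧
        r = ∫ ω, ℓ (Y ω) (h (f (X ω))) ∂μ} :=
      ⟨_, fun t => max 0 (min 1 t), h₀mono, h₀01, rfl⟩
    have hlow : ∀ r ∈ {r : ℝ | ∃ h : ℝ → ℝ, Monotone h ∧ (∀ t, h t ∈ Icc (0:ℝ) 1) ∧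
        r = ∫ ω, ℓ (Y ω) (h (f (X ω))) ∂μ},
        (∫ ω, ℓ (Y ω) (g ω) ∂μ) - 2 * cutoffCE μ X Y f ≤ r := by
      rintro r ⟨h, hhmono, hh01, rfl⟩
      obtain ⟨eq1, int1⟩ := main h hhmono.measurable hh01
      have hle : (∫ ω, ℓ (Y ω) (g ω) ∂μ) - (∫ ω, ℓ (Y ω) (h (g ω)) ∂μ)
          ≤ 2 * cutoffCE μ X Y f := by
        rw [eq1]
        calc _ ≤ ∫ _τ, 2 * cutoffCE μ X Y f ∂ν :=
              integral_mono int1 (integrable_const _) (fun τ => part2 h hhmono τ)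
          _ = 2 * cutoffCE μ X Y f := by simp
      linarith
    have := le_csInf hne hlow
    linarith
end

section
/- Let ε₁,…,εₙ be i.i.d. Rademacher random variables (each equal to ±1 with probability 1/2). Then E[ sup over vectors f ∈ [−1,1]^n satisfying Σ_{i=1}^{n−1} |f_{i+1} − f_i| ≤ M of (1/n)·Σ_{i=1}^n ε_i f_i ] ≤ (2M + 1)/√n. -/
open MeasureTheory Set

namespace RadBV

variable {n : ℕ}

/-- The i-th ±1 step determined by ω (0 outside range). -/
def stepZ (ω : Fin n → Bool) (i : ℕ) : ℤ :=
  if h : i < n then (if ω ⟨i, h⟩ then 1 else -1) else 0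

/-- Partial sums of the steps. -/
def walk (ω : Fin n → Bool) (k : ℕ) : ℤ := ∑ i ∈ Finset.range k, stepZ ω i

lemma walk_zero (ω : Fin n → Bool) : walk ω 0 = 0 := by simp [walk]

lemma walk_succ (ω : Fin n → Bool) (k : ℕ) : walk ω (k+1) = walk ω k + stepZ ω k :=
  Finset.sum_range_succ _ _

lemma abs_stepZ_le (ω : Fin n → Bool) (i : ℕ) : |stepZ ω i| ≤ 1 := by
  unfold stepZ
  split <;> [skip; simp]
  split <;> simp

lemma abs_walk_le (ω : Fin n → Bool) (k : ℕ) : |walk ω k| ≤ k := by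
  calc |walk ω k| ≤ ∑ i ∈ Finset.range k, |stepZ ω i| := Finset.abs_sum_le_sum_abs _ _
    _ ≤ ∑ _i ∈ Finset.range k, 1 := Finset.sum_le_sum fun i _ => abs_stepZ_le ω i
    _ = k := by simp

/-- running maximum of the walk -/
def Mx (ω : Fin n → Bool) : ℤ :=
  (Finset.range (n+1)).sup' Finset.nonempty_range_add_one (fun k => walk ω k)

/-- running maximum of |walk| -/
def B (ω : Fin n → Bool) : ℤ :=
  (Finset.range (n+1)).sup' Finset.nonempty_range_add_one (fun k => |walk ω k|)

lemma walk_le_Mx (ω : Fin n → Bool) {k : ℕ} (hk : k ≤ n) : walk ω k ≤ Mx ω :=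
  Finset.le_sup' _ (by simpa using Nat.lt_succ_of_le hk)

lemma Mx_nonneg (ω : Fin n → Bool) : 0 ≤ Mx ω := by
  simpa [walk_zero] using walk_le_Mx ω (Nat.zero_le n)

lemma Mx_le (ω : Fin n → Bool) : Mx ω ≤ n := by
  apply Finset.sup'_le
  intro k hk
  have hk' : k ≤ n := by simpa [Nat.lt_succ_iff] using hk
  have := abs_walk_le ω k
  have : walk ω k ≤ k := le_trans (le_abs_self _) this
  exact le_trans this (by exact_mod_cast Nat.cast_le.mpr hk')

lemma abs_walk_le_B (ω : Fin n → Bool) {k : ℕ} (hk : k ≤ n) : |walk ω k| ≤ B ω :=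
  Finset.le_sup' (fun k => |walk ω k|) (by simpa using Nat.lt_succ_of_le hk)

lemma B_nonneg (ω : Fin n → Bool) : 0 ≤ B ω :=
  le_trans (abs_nonneg _) (abs_walk_le_B ω (Nat.zero_le n))

/-- flip all coordinates -/
def negc (ω : Fin n → Bool) : Fin n → Bool := fun i => !(ω i)

lemma stepZ_negc (ω : Fin n → Bool) (i : ℕ) : stepZ (negc ω) i = -stepZ ω i := by
  unfold stepZ negc
  split <;> [skip; simp]
  rcases Bool.dichotomy (ω ⟨i, by assumption⟩) with h | h <;> simp [h]

lemma walk_negc (ω : Fin n → Bool) (k : ℕ) : walk (negc ω) k = -walk ω k := by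
  simp [walk, stepZ_negc]

lemma negc_involutive : Function.Involutive (negc (n := n)) := by
  intro ω; funext i; simp [negc]

lemma B_le_Mx_add (ω : Fin n → Bool) : B ω ≤ Mx ω + Mx (negc ω) := by
  apply Finset.sup'_le
  intro k hk
  have hk' : k ≤ n := by simpa [Nat.lt_succ_iff] using hk
  rcases abs_cases (walk ω k) with ⟨h, _⟩ | ⟨h, _⟩
  · rw [h]
    have := walk_le_Mx ω hk'
    have h2 := Mx_nonneg (negc ω)
    omega
  · rw [h]
    have := walk_le_Mx (negc ω) hk'
    rw [walk_negc] at this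
    have h2 := Mx_nonneg ω
    omega


/-- first time the walk reaches level `lam` (or `n+1` if never by time `n`) -/
def tau (lam : ℤ) (ω : Fin n → Bool) : ℕ :=
  Nat.find (p := fun k => lam ≤ walk ω k ∨ n < k) ⟨n+1, Or.inr (Nat.lt_succ_self n)⟩

lemma exists_hit {lam : ℤ} {ω : Fin n → Bool} (h : lam ≤ Mx ω) :
    ∃ k ≤ n, lam ≤ walk ω k := by
  obtain ⟨k, hk, hEq⟩ := Finset.exists_mem_eq_sup' (Finset.nonempty_range_add_one) (fun k => walk ω k)
  exact ⟨k, by simpa [Nat.lt_succ_iff] using hk, hEq ▸ h⟩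

lemma tau_le {lam : ℤ} {ω : Fin n → Bool} (h : lam ≤ Mx ω) : tau lam ω ≤ n := by
  obtain ⟨k, hk, hw⟩ := exists_hit h
  exact le_trans (Nat.find_le (Or.inl hw)) hk

lemma le_walk_tau {lam : ℤ} {ω : Fin n → Bool} (h : lam ≤ Mx ω) :
    lam ≤ walk ω (tau lam ω) := by
  have := Nat.find_spec (p := fun k => lam ≤ walk ω k ∨ n < k) ⟨n+1, Or.inr (Nat.lt_succ_self n)⟩
  rcases this with h' | h'
  · exact h'
  · exact absurd (tau_le h) (not_le.mpr h')

lemma walk_lt_of_lt_tau {lam : ℤ} {ω : Fin n → Bool} {j : ℕ} (hj : j < tau lam ω) :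
    walk ω j < lam := by
  have := Nat.find_min (p := fun k => lam ≤ walk ω k ∨ n < k) ⟨n+1, Or.inr (Nat.lt_succ_self n)⟩ hj
  rcases not_or.mp this with ⟨h1, _⟩
  exact not_le.mp h1

lemma tau_pos {lam : ℤ} {ω : Fin n → Bool} (h1 : 1 ≤ lam) (h : lam ≤ Mx ω) :
    0 < tau lam ω := by
  by_contra hz
  have hz0 : tau lam ω = 0 := by omega
  have := le_walk_tau h
  rw [hz0, walk_zero] at this
  omega

lemma walk_tau_eq {lam : ℤ} {ω : Fin n → Bool} (h1 : 1 ≤ lam) (h : lam ≤ Mx ω) :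
    walk ω (tau lam ω) = lam := by
  set t := tau lam ω with ht
  have hpos : 0 < t := tau_pos h1 h
  have hlt : walk ω (t - 1) < lam := walk_lt_of_lt_tau (by omega)
  have hstep : walk ω t = walk ω (t-1) + stepZ ω (t-1) := by
    have : t - 1 + 1 = t := by omega
    rw [← this]
    exact Finset.sum_range_succ _ _
  have hs := abs_stepZ_le ω (t-1)
  have hle := le_walk_tau h
  rw [← ht] at hle
  have : stepZ ω (t-1) ≤ 1 := le_trans (le_abs_self _) hs
  omega
/-- flip coordinates from position t on -/
def flipAfter (t : ℕ) (ω : Fin n → Bool) : Fin n → Bool :=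
  fun i => if (i : ℕ) < t then ω i else !(ω i)

lemma stepZ_flipAfter (t : ℕ) (ω : Fin n → Bool) (i : ℕ) :
    stepZ (flipAfter t ω) i = if i < t then stepZ ω i else -stepZ ω i := by
  unfold stepZ flipAfter
  by_cases h : i < n
  · simp only [dif_pos h]
    by_cases ht : i < t
    · simp [ht]
    · rcases Bool.dichotomy (ω ⟨i, h⟩) with hb | hb <;> simp [ht, hb]
  · simp [dif_neg h]

lemma walk_flipAfter_of_le (t : ℕ) (ω : Fin n → Bool) {k : ℕ} (hk : k ≤ t) :
    walk (flipAfter t ω) k = walk ω k := by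
  unfold walk
  apply Finset.sum_congr rfl
  intro i hi
  have : i < t := lt_of_lt_of_le (Finset.mem_range.mp hi) hk
  rw [stepZ_flipAfter, if_pos this]

lemma walk_flipAfter_of_ge (t : ℕ) (ω : Fin n → Bool) {k : ℕ} (hk : t ≤ k) :
    walk (flipAfter t ω) k = 2 * walk ω t - walk ω k := by
  unfold walk
  rw [Finset.range_eq_Ico, ← Finset.sum_Ico_consecutive _ (Nat.zero_le t) hk,
    ← Finset.sum_Ico_consecutive (fun i => stepZ ω i) (Nat.zero_le t) hk]
  have h1 : ∑ i ∈ Finset.Ico 0 t, stepZ (flipAfter t ω) i = ∑ i ∈ Finset.Ico 0 t, stepZ ω i := by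
    apply Finset.sum_congr rfl
    intro i hi
    rw [stepZ_flipAfter, if_pos (Finset.mem_Ico.mp hi).2]
  have h2 : ∑ i ∈ Finset.Ico t k, stepZ (flipAfter t ω) i = -∑ i ∈ Finset.Ico t k, stepZ ω i := by
    rw [← Finset.sum_neg_distrib]
    apply Finset.sum_congr rfl
    intro i hi
    rw [stepZ_flipAfter, if_neg (not_lt.mpr (Finset.mem_Ico.mp hi).1)]
  rw [h1, h2]
  rw [Finset.range_eq_Ico]
  ring

/-- reflection map at level lam -/
def phi (lam : ℤ) (ω : Fin n → Bool) : Fin n → Bool := flipAfter (tau lam ω) ω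

lemma le_Mx_phi {lam : ℤ} {ω : Fin n → Bool} (h1 : 1 ≤ lam) (h : lam ≤ Mx ω) :
    lam ≤ Mx (phi lam ω) := by
  have : walk (phi lam ω) (tau lam ω) = lam := by
    rw [phi, walk_flipAfter_of_le _ _ (le_refl _), walk_tau_eq h1 h]
  calc lam = walk (phi lam ω) (tau lam ω) := this.symm
    _ ≤ Mx (phi lam ω) := Finset.le_sup' (fun k => walk _ k)
        (by simpa [Nat.lt_succ_iff] using tau_le h)

lemma tau_phi {lam : ℤ} {ω : Fin n → Bool} (h1 : 1 ≤ lam) (h : lam ≤ Mx ω) :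
    tau lam (phi lam ω) = tau lam ω := by
  rw [tau, Nat.find_eq_iff]
  constructor
  · left
    rw [phi, walk_flipAfter_of_le _ _ (le_refl _), walk_tau_eq h1 h]
  · intro j hj
    rw [not_or, not_lt, not_le]
    constructor
    · rw [phi, walk_flipAfter_of_le _ _ (le_of_lt hj)]
      exact walk_lt_of_lt_tau hj
    · exact le_trans (le_of_lt hj) (tau_le h)

lemma phi_phi {lam : ℤ} {ω : Fin n → Bool} (h1 : 1 ≤ lam) (h : lam ≤ Mx ω) :
    phi lam (phi lam ω) = ω := by
  rw [phi, tau_phi h1 h]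
  funext i
  simp only [phi, flipAfter]
  by_cases hi : (i : ℕ) < tau lam ω <;> simp [hi]

lemma walk_phi_final {lam : ℤ} {ω : Fin n → Bool} (h1 : 1 ≤ lam) (h : lam ≤ Mx ω) :
    walk (phi lam ω) n = 2 * lam - walk ω n := by
  rw [phi, walk_flipAfter_of_ge _ _ (tau_le h), walk_tau_eq h1 h]

lemma walk_negc_phi_final {lam : ℤ} {ω : Fin n → Bool} (h1 : 1 ≤ lam) (h : lam ≤ Mx ω) :
    walk (negc (phi lam ω)) n = walk ω n - 2 * lam := by
  rw [walk_negc, walk_phi_final h1 h]; ring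

lemma count_max (lam : ℤ) (h1 : 1 ≤ lam) :
    (Finset.univ.filter fun ω : Fin n → Bool => lam ≤ Mx ω).card ≤
      (Finset.univ.filter fun ω : Fin n → Bool => lam ≤ |walk ω n|).card := by
  classical
  apply Finset.card_le_card_of_injOn
    (fun ω => if lam ≤ walk ω n then ω else negc (phi lam ω))
  · intro ω hω
    have hM : lam ≤ Mx ω := (Finset.mem_filter.mp hω).2
    by_cases hb : lam ≤ walk ω n
    · simp only [if_pos hb]
      exact Finset.mem_filter.mpr ⟨Finset.mem_univ _, le_trans hb (le_abs_self _)⟩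
    · simp only [if_neg hb]
      refine Finset.mem_filter.mpr ⟨Finset.mem_univ _, ?_⟩
      have hfin := walk_negc_phi_final h1 hM
      have : walk (negc (phi lam ω)) n ≤ -lam := by omega
      calc lam ≤ -walk (negc (phi lam ω)) n := by omega
        _ ≤ |walk (negc (phi lam ω)) n| := neg_le_abs _
  · intro ω hω ω' hω' heq
    have hM : lam ≤ Mx ω := by simpa using hω
    have hM' : lam ≤ Mx ω' := by simpa using hω'
    simp only at heq
    by_cases hb : lam ≤ walk ω n <;> by_cases hb' : lam ≤ walk ω' n
    · rwa [if_pos hb, if_pos hb'] at heq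
    · rw [if_pos hb, if_neg hb'] at heq
      exfalso
      have hfin := walk_negc_phi_final h1 hM'
      have : walk ω n = walk (negc (phi lam ω')) n := by rw [heq]
      omega
    · rw [if_neg hb, if_pos hb'] at heq
      exfalso
      have hfin := walk_negc_phi_final h1 hM
      have : walk (negc (phi lam ω)) n = walk ω' n := by rw [heq]
      omega
    · rw [if_neg hb, if_neg hb'] at heq
      have h2 : phi lam ω = phi lam ω' := negc_involutive.injective heq
      have := congrArg (phi lam) h2
      rwa [phi_phi h1 hM, phi_phi h1 hM'] at this

lemma layer (f : (Fin n → Bool) → ℤ) (h0 : ∀ ω, 0 ≤ f ω) (hle : ∀ ω, f ω ≤ n) :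
    ∑ ω, f ω =
      ∑ lam ∈ Finset.Icc (1:ℤ) n, ((Finset.univ.filter fun ω => lam ≤ f ω).card : ℤ) := by
  classical
  have key : ∀ ω, f ω = ∑ lam ∈ Finset.Icc (1:ℤ) n, (if lam ≤ f ω then (1:ℤ) else 0) := by
    intro ω
    rw [Finset.sum_boole]
    have : (Finset.Icc (1:ℤ) n).filter (fun lam => lam ≤ f ω) = Finset.Icc 1 (f ω) := by
      ext x
      simp only [Finset.mem_filter, Finset.mem_Icc]
      have := h0 ω; have := hle ω
      omega
    rw [this, Int.card_Icc]
    have := h0 ω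
    omega
  calc ∑ ω, f ω = ∑ ω, ∑ lam ∈ Finset.Icc (1:ℤ) n, (if lam ≤ f ω then (1:ℤ) else 0) :=
        Finset.sum_congr rfl fun ω _ => key ω
    _ = ∑ lam ∈ Finset.Icc (1:ℤ) n, ∑ ω, (if lam ≤ f ω then (1:ℤ) else 0) := Finset.sum_comm
    _ = _ := Finset.sum_congr rfl fun lam _ => by rw [Finset.sum_boole]

lemma abs_walk_n_le (ω : Fin n → Bool) : |walk ω n| ≤ (n : ℤ) := abs_walk_le ω n

lemma sum_Mx_le : ∑ ω : Fin n → Bool, Mx ω ≤ ∑ ω : Fin n → Bool, |walk ω n| := by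
  classical
  rw [layer (fun ω => Mx ω) Mx_nonneg Mx_le,
    layer (fun ω => |walk ω n|) (fun ω => abs_nonneg _) abs_walk_n_le]
  apply Finset.sum_le_sum
  intro lam hlam
  have h1 : 1 ≤ lam := (Finset.mem_Icc.mp hlam).1
  exact_mod_cast count_max lam h1

lemma sum_B_le : ∑ ω : Fin n → Bool, B ω ≤ 2 * ∑ ω : Fin n → Bool, |walk ω n| := by
  have h1 : ∑ ω : Fin n → Bool, B ω ≤
      ∑ ω : Fin n → Bool, (Mx ω + Mx (negc ω)) :=
    Finset.sum_le_sum fun ω _ => B_le_Mx_add ω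
  have h2 : ∑ ω : Fin n → Bool, Mx (negc ω) = ∑ ω : Fin n → Bool, Mx ω :=
    Function.Bijective.sum_comp negc_involutive.bijective _
  rw [Finset.sum_add_distrib, h2] at h1
  have := sum_Mx_le (n := n)
  omega

lemma sum_step_mul {i j : ℕ} (hi : i < n) (hj : j < n) (hij : i ≠ j) :
    ∑ ω : Fin n → Bool, stepZ ω i * stepZ ω j = 0 := by
  classical
  set g : (Fin n → Bool) → (Fin n → Bool) :=
    fun ω => Function.update ω ⟨i, hi⟩ (!(ω ⟨i, hi⟩)) with hg
  have ginv : Function.Involutive g := by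
    intro ω
    funext x
    by_cases hx : x = (⟨i, hi⟩ : Fin n)
    · subst hx; simp [hg, Function.update_self]
    · simp [hg, Function.update_of_ne hx]
  have hstepi : ∀ ω, stepZ (g ω) i = -stepZ ω i := by
    intro ω
    unfold stepZ
    rw [dif_pos hi, dif_pos hi]
    have : (g ω) ⟨i, hi⟩ = !(ω ⟨i, hi⟩) := by simp [hg, Function.update_self]
    rw [this]
    rcases Bool.dichotomy (ω ⟨i, hi⟩) with hb | hb <;> simp [hb]
  have hstepj : ∀ ω, stepZ (g ω) j = stepZ ω j := by
    intro ω
    unfold stepZ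
    rw [dif_pos hj, dif_pos hj]
    have hne : (⟨j, hj⟩ : Fin n) ≠ ⟨i, hi⟩ := by
      simp only [ne_eq, Fin.mk.injEq]
      omega
    have : (g ω) ⟨j, hj⟩ = ω ⟨j, hj⟩ := by simp [hg, Function.update_of_ne hne]
    rw [this]
  have hflip : ∑ ω : Fin n → Bool, stepZ ω i * stepZ ω j
      = ∑ ω : Fin n → Bool, stepZ (g ω) i * stepZ (g ω) j :=
    (Function.Bijective.sum_comp ginv.bijective _).symm
  have : ∑ ω : Fin n → Bool, stepZ (g ω) i * stepZ (g ω) j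
      = -∑ ω : Fin n → Bool, stepZ ω i * stepZ ω j := by
    rw [← Finset.sum_neg_distrib]
    apply Finset.sum_congr rfl
    intro ω _
    rw [hstepi, hstepj]
    ring
  omega

lemma card_cube : Fintype.card (Fin n → Bool) = 2 ^ n := by
  simp [Fintype.card_fun]

lemma sum_sq_walk : ∑ ω : Fin n → Bool, (walk ω n) ^ 2 = 2 ^ n * n := by
  classical
  have expand : ∀ ω : Fin n → Bool, (walk ω n) ^ 2 =
      ∑ i ∈ Finset.range n, ∑ j ∈ Finset.range n, stepZ ω i * stepZ ω j := by
    intro ω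
    rw [sq, walk, Finset.sum_mul_sum]
  calc ∑ ω : Fin n → Bool, (walk ω n) ^ 2
      = ∑ ω : Fin n → Bool, ∑ i ∈ Finset.range n, ∑ j ∈ Finset.range n,
          stepZ ω i * stepZ ω j := Finset.sum_congr rfl fun ω _ => expand ω
    _ = ∑ i ∈ Finset.range n, ∑ ω : Fin n → Bool, ∑ j ∈ Finset.range n,
          stepZ ω i * stepZ ω j := Finset.sum_comm
    _ = ∑ i ∈ Finset.range n, ∑ j ∈ Finset.range n, ∑ ω : Fin n → Bool,
          stepZ ω i * stepZ ω j := Finset.sum_congr rfl fun i _ => Finset.sum_comm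
    _ = ∑ i ∈ Finset.range n, ∑ j ∈ Finset.range n, (if i = j then (2:ℤ)^n else 0) := by
        apply Finset.sum_congr rfl
        intro i hi
        apply Finset.sum_congr rfl
        intro j hj
        have hi' : i < n := Finset.mem_range.mp hi
        have hj' : j < n := Finset.mem_range.mp hj
        by_cases hij : i = j
        · subst hij
          rw [if_pos rfl]
          have : ∀ ω : Fin n → Bool, stepZ ω i * stepZ ω i = 1 := by
            intro ω
            unfold stepZ
            rw [dif_pos hi']
            rcases Bool.dichotomy (ω ⟨i, hi'⟩) with hb | hb <;> simp [hb]
          rw [Finset.sum_congr rfl fun ω _ => this ω, Finset.sum_const,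
            Finset.card_univ, card_cube (n := n)]
          simp
        · rw [if_neg hij]
          exact sum_step_mul hi' hj' hij
    _ = ∑ i ∈ Finset.range n, (2:ℤ)^n := Finset.sum_congr rfl fun i hi => by
        rw [Finset.sum_ite_eq (Finset.range n) i fun _ => (2:ℤ)^n, if_pos hi]
    _ = 2 ^ n * n := by simp [mul_comm]

lemma sum_abs_walk_le : ∑ ω : Fin n → Bool, (|walk ω n| : ℝ) ≤ 2 ^ n * Real.sqrt n := by
  classical
  set a : ℝ := ∑ ω : Fin n → Bool, (|walk ω n| : ℝ) with ha
  have ha0 : 0 ≤ a := Finset.sum_nonneg fun ω _ => by positivity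
  have hcs : a ^ 2 ≤ (∑ _ω : Fin n → Bool, (1:ℝ)^2) *
      ∑ ω : Fin n → Bool, ((|walk ω n| : ℝ))^2 := by
    have := Finset.sum_mul_sq_le_sq_mul_sq Finset.univ
      (fun _ : Fin n → Bool => (1:ℝ)) (fun ω => (|walk ω n| : ℝ))
    simpa [ha] using this
  have hsq : ∑ ω : Fin n → Bool, ((|walk ω n| : ℝ))^2 = 2 ^ n * n := by
    have : ∀ ω : Fin n → Bool, ((|walk ω n| : ℝ))^2 = (((walk ω n)^2 : ℤ) : ℝ) := by
      intro ω; push_cast; rw [sq_abs]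
    rw [Finset.sum_congr rfl fun ω _ => this ω, ← Int.cast_sum, sum_sq_walk]
    push_cast
    ring
  have hone : (∑ _ω : Fin n → Bool, (1:ℝ)^2) = 2 ^ n := by
    rw [Finset.sum_const, Finset.card_univ, card_cube (n := n)]
    simp
  rw [hone, hsq] at hcs
  have h2 : a ^ 2 ≤ (2 ^ n * Real.sqrt n) ^ 2 := by
    have : (2 ^ n * Real.sqrt n : ℝ) ^ 2 = 2 ^ n * (2 ^ n * n) := by
      rw [mul_pow, Real.sq_sqrt (Nat.cast_nonneg n)]
      ring
    rw [this]
    exact hcs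
  have hb0 : (0:ℝ) ≤ 2 ^ n * Real.sqrt n := by positivity
  nlinarith [h2, ha0, hb0]

lemma abel (e w : ℕ → ℝ) (m : ℕ) :
    ∑ i ∈ Finset.range m, e i * w i =
      w 0 * (∑ i ∈ Finset.range m, e i) +
      ∑ j ∈ Finset.range m, (w (j+1) - w j) * (∑ i ∈ Finset.Ico (j+1) m, e i) := by
  have htel : ∀ i, w i = w 0 + ∑ j ∈ Finset.range i, (w (j+1) - w j) := by
    intro i
    rw [Finset.sum_range_sub (fun j => w j)]
    ring
  have hcomm := Finset.sum_Ico_Ico_comm' 0 m (fun a b => (w (a+1) - w a) * e b)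
  calc ∑ i ∈ Finset.range m, e i * w i
      = ∑ i ∈ Finset.range m, (e i * w 0 + ∑ j ∈ Finset.range i, (w (j+1) - w j) * e i) := by
        apply Finset.sum_congr rfl
        intro i _
        rw [htel i, mul_add, Finset.mul_sum]
        congr 1
        apply Finset.sum_congr rfl
        intro j _
        ring
    _ = (∑ i ∈ Finset.range m, e i * w 0)
        + ∑ i ∈ Finset.range m, ∑ j ∈ Finset.range i, (w (j+1) - w j) * e i :=
        Finset.sum_add_distrib
    _ = w 0 * (∑ i ∈ Finset.range m, e i)
        + ∑ j ∈ Finset.range m, (w (j+1) - w j) * (∑ i ∈ Finset.Ico (j+1) m, e i) := by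
        congr 1
        · rw [← Finset.sum_mul, mul_comm]
        · simp only [Finset.range_eq_Ico]; rw [← hcomm]
          apply Finset.sum_congr rfl
          intro j _
          rw [Finset.mul_sum]


lemma stepZ_rev (ω : Fin n → Bool) {i : ℕ} (hi : i < n) :
    stepZ (ω ∘ Fin.rev) i = stepZ ω (n - 1 - i) := by
  unfold stepZ
  rw [dif_pos hi, dif_pos (show n - 1 - i < n by omega)]
  have hrev : Fin.rev (⟨i, hi⟩ : Fin n) = ⟨n - 1 - i, by omega⟩ := by
    ext
    rw [Fin.val_rev]
    show n - (i + 1) = n - 1 - i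
    omega
  simp only [Function.comp_apply, hrev]

lemma walk_rev (ω : Fin n → Bool) {m : ℕ} (hm : m ≤ n) :
    walk (ω ∘ Fin.rev) m = walk ω n - walk ω (n - m) := by
  unfold walk
  have h1 : ∑ i ∈ Finset.range m, stepZ (ω ∘ Fin.rev) i
      = ∑ i ∈ Finset.range m, stepZ ω (n - m + (m - 1 - i)) := by
    apply Finset.sum_congr rfl
    intro i hi
    have hi' : i < m := Finset.mem_range.mp hi
    rw [stepZ_rev ω (lt_of_lt_of_le hi' hm)]
    congr 1
    omega
  have h2 : ∑ j ∈ Finset.range m, stepZ ω (n - m + j)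
      = ∑ j ∈ Finset.Ico (n - m) n, stepZ ω j := by
    rw [Finset.sum_Ico_eq_sum_range, Nat.sub_sub_self hm]
  rw [h1, Finset.sum_range_reflect (fun j => stepZ ω (n - m + j)) m, h2,
    Finset.sum_Ico_eq_sub (fun j => stepZ ω j) (Nat.sub_le n m)]


lemma suffix_le_B (ω : Fin n → Bool) {k : ℕ} (hk : k ≤ n) :
    |walk ω n - walk ω k| ≤ B (ω ∘ Fin.rev) := by
  have h := walk_rev ω (Nat.sub_le n k)
  rw [Nat.sub_sub_self hk] at h
  rw [← h]
  exact abs_walk_le_B _ (Nat.sub_le n k)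

lemma sum_bound (hn : 0 < n) (M : ℝ) (hM : 0 < M) (ω : Fin n → Bool)
    (v : Fin n → ℝ) (hIcc : ∀ i, v i ∈ Set.Icc (-1:ℝ) 1)
    (hTV : (∑ i : Fin (n-1),
        |v ⟨i.1 + 1, Nat.add_lt_of_lt_sub i.isLt⟩ - v ⟨i.1, lt_of_lt_of_le i.isLt (Nat.sub_le n 1)⟩|) ≤ M) :
    |∑ i : Fin n, (if ω i then (1:ℝ) else -1) * v i|
      ≤ ((|walk ω n| : ℤ) : ℝ) + M * ((B (ω ∘ Fin.rev) : ℤ) : ℝ) := by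
  classical
  set e : ℕ → ℝ := fun i => ((stepZ ω i : ℤ) : ℝ) with he
  set w : ℕ → ℝ := fun j => if h : j < n then v ⟨j, h⟩ else 0 with hw
  have hBR : (0:ℝ) ≤ ((B (ω ∘ Fin.rev) : ℤ) : ℝ) := by exact_mod_cast B_nonneg _
  -- rewrite the Fin-sum as a range-sum
  have hsum : ∑ i : Fin n, (if ω i then (1:ℝ) else -1) * v i
      = ∑ i ∈ Finset.range n, e i * w i := by
    rw [← Fin.sum_univ_eq_sum_range (fun i => e i * w i) n]
    apply Finset.sum_congr rfl
    intro i _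
    have he1 : e i.1 = (if ω i then (1:ℝ) else -1) := by
      simp only [he, stepZ, dif_pos i.isLt, Fin.eta]
      split <;> simp
    have hw1 : w i.1 = v i := by
      simp only [hw, dif_pos i.isLt, Fin.eta]
    rw [he1, hw1]
  -- evaluate the partial sums of e
  have hT : ∀ j : ℕ, j + 1 ≤ n → ∑ i ∈ Finset.Ico (j+1) n, e i
      = ((walk ω n - walk ω (j+1) : ℤ) : ℝ) := by
    intro j hj
    have := Finset.sum_Ico_eq_sub (fun i => stepZ ω i) hj
    rw [he]
    push_cast
    rw [← Int.cast_sum, this, walk, walk]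
    push_cast [Int.cast_sum]
    ring
  have hS : ∑ i ∈ Finset.range n, e i = ((walk ω n : ℤ) : ℝ) := by
    rw [he, walk, Int.cast_sum]

  -- Abel summation
  rw [hsum, abel e w n]
  -- last term of the Abel sum vanishes
  have hlast : (w (n-1+1) - w (n-1)) * (∑ i ∈ Finset.Ico (n-1+1) n, e i) = 0 := by
    rw [show n - 1 + 1 = n from by omega, Finset.Ico_self, Finset.sum_empty, mul_zero]
  have hsplit : ∑ j ∈ Finset.range n, (w (j+1) - w j) * (∑ i ∈ Finset.Ico (j+1) n, e i)
      = ∑ j ∈ Finset.range (n-1), (w (j+1) - w j) * (∑ i ∈ Finset.Ico (j+1) n, e i) := by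
    have h := Finset.sum_range_succ
      (fun j => (w (j+1) - w j) * (∑ i ∈ Finset.Ico (j+1) n, e i)) (n-1)
    rw [show n - 1 + 1 = n from by omega] at h
    rw [h, show n - 1 + 1 = n from by omega] at *
    rw [hlast, add_zero]
  rw [hsplit, hS]
  have hw0 : |w 0| ≤ 1 := by
    rw [hw]
    simp only [dif_pos hn]
    rcases hIcc ⟨0, hn⟩ with ⟨h1, h2⟩
    rw [abs_le]
    constructor <;> linarith
  have hdTV : ∑ j ∈ Finset.range (n-1), |w (j+1) - w j| ≤ M := by
    rw [← Fin.sum_univ_eq_sum_range (fun j => |w (j+1) - w j|) (n-1)]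
    refine le_trans (le_of_eq ?_) hTV
    apply Finset.sum_congr rfl
    intro i _
    have hi1 : i.1 + 1 < n := by have := i.isLt; omega
    have hi2 : i.1 < n := by omega
    rw [hw]
    simp only [dif_pos hi1, dif_pos hi2]
  have hTbound : ∀ j ∈ Finset.range (n-1),
      |(w (j+1) - w j) * (∑ i ∈ Finset.Ico (j+1) n, e i)|
        ≤ |w (j+1) - w j| * ((B (ω ∘ Fin.rev) : ℤ) : ℝ) := by
    intro j hj
    have hj1 : j + 1 ≤ n := by have := Finset.mem_range.mp hj; omega
    rw [abs_mul]
    apply mul_le_mul_of_nonneg_left _ (abs_nonneg _)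
    rw [hT j hj1, ← Int.cast_abs]
    exact_mod_cast suffix_le_B ω hj1
  calc |w 0 * ((walk ω n : ℤ) : ℝ)
        + ∑ j ∈ Finset.range (n-1), (w (j+1) - w j) * (∑ i ∈ Finset.Ico (j+1) n, e i)|
      ≤ |w 0 * ((walk ω n : ℤ) : ℝ)|
        + |∑ j ∈ Finset.range (n-1), (w (j+1) - w j) * (∑ i ∈ Finset.Ico (j+1) n, e i)| :=
        abs_add_le _ _
    _ ≤ |w 0| * |((walk ω n : ℤ) : ℝ)|
        + ∑ j ∈ Finset.range (n-1), |(w (j+1) - w j) * (∑ i ∈ Finset.Ico (j+1) n, e i)| := by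
        rw [abs_mul]
        exact add_le_add_right (Finset.abs_sum_le_sum_abs _ _) _
    _ ≤ 1 * |((walk ω n : ℤ) : ℝ)|
        + ∑ j ∈ Finset.range (n-1), |w (j+1) - w j| * ((B (ω ∘ Fin.rev) : ℤ) : ℝ) := by
        apply add_le_add
        · exact mul_le_mul_of_nonneg_right hw0 (abs_nonneg _)
        · exact Finset.sum_le_sum hTbound
    _ ≤ ((|walk ω n| : ℤ) : ℝ) + M * ((B (ω ∘ Fin.rev) : ℤ) : ℝ) := by
        rw [one_mul, ← Finset.sum_mul, Int.cast_abs]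
        exact add_le_add_right (mul_le_mul_of_nonneg_right hdTV hBR) _

end RadBV

/-- Rademacher complexity bound for vectors of bounded discrete total variation:
for i.i.d. Rademacher signs `ε₁,…,εₙ` (realized as `±1`-valued coordinates of a uniform
point of `Bool^n`),
`E[sup_{f ∈ [−1,1]ⁿ, Σᵢ|f_{i+1}−f_i| ≤ M} (1/n)·Σᵢ εᵢ fᵢ] ≤ (2M+1)/√n`. -/
theorem rademacher_bv_bound (n : ℕ) (hn : 0 < n) (M : ℝ) (hM : 0 < M) :
    (∫ ω : Fin n → Bool,
        (⨆ v : {v : Fin n → ℝ // (∀ i, v i ∈ Icc (-1:ℝ) 1) ∧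
            (∑ i : Fin (n-1),
              |v ⟨i.1 + 1, by have := i.isLt; omega⟩ - v ⟨i.1, by have := i.isLt; omega⟩|)
              ≤ M},
          (n : ℝ)⁻¹ * ∑ i, (if ω i then (1:ℝ) else -1) * v.1 i)
        ∂((PMF.uniformOfFintype (Fin n → Bool)).toMeasure))
      ≤ (2 * M + 1) / Real.sqrt n := by
  classical
  haveI hne : Nonempty {v : Fin n → ℝ // (∀ i, v i ∈ Icc (-1:ℝ) 1) ∧
      (∑ i : Fin (n-1),
        |v ⟨i.1 + 1, by have := i.isLt; omega⟩ - v ⟨i.1, by have := i.isLt; omega⟩|)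
        ≤ M} :=
    ⟨⟨fun _ => 0, fun i => by norm_num, by simp; linarith⟩⟩
  have hcoef : ∀ ω : Fin n → Bool,
      ((PMF.uniformOfFintype (Fin n → Bool)) ω).toReal = ((2:ℝ)^n)⁻¹ := by
    intro ω
    rw [PMF.uniformOfFintype_apply, RadBV.card_cube]
    rw [ENNReal.toReal_inv]
    norm_num
  have hn0 : (0:ℝ) < (n:ℝ) := by exact_mod_cast hn
  have hsn : (0:ℝ) < Real.sqrt n := Real.sqrt_pos.mpr hn0
  have hns : Real.sqrt n * Real.sqrt n = (n:ℝ) := Real.mul_self_sqrt (le_of_lt hn0)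
  rw [PMF.integral_eq_sum]
  refine le_trans (Finset.sum_le_sum (g := fun ω => ((2:ℝ)^n)⁻¹ *
      ((n:ℝ)⁻¹ * (((|RadBV.walk ω n| : ℤ) : ℝ) + M * ((RadBV.B (ω ∘ Fin.rev) : ℤ) : ℝ))))
      (fun ω _ => ?_)) ?_
  · rw [hcoef ω, smul_eq_mul]
    apply mul_le_mul_of_nonneg_left _ (by positivity)
    apply ciSup_le
    intro v
    apply mul_le_mul_of_nonneg_left _ (by positivity)
    exact le_trans (le_abs_self _) (RadBV.sum_bound hn M hM ω v.1 v.2.1 v.2.2)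
  · rw [← Finset.mul_sum, ← Finset.mul_sum, Finset.sum_add_distrib, ← Finset.mul_sum]
    have hrev : ∑ ω : Fin n → Bool, ((RadBV.B (ω ∘ Fin.rev) : ℤ) : ℝ)
        = ∑ ω : Fin n → Bool, ((RadBV.B ω : ℤ) : ℝ) := by
      have hinv : Function.Involutive (fun ω : Fin n → Bool => ω ∘ Fin.rev) := by
        intro ω
        funext i
        simp [Function.comp, Fin.rev_rev]
      exact Function.Bijective.sum_comp hinv.bijective
        (fun ω : Fin n → Bool => ((RadBV.B ω : ℤ) : ℝ))
    rw [hrev]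
    have hA : ∑ ω : Fin n → Bool, ((|RadBV.walk ω n| : ℤ) : ℝ) ≤ 2^n * Real.sqrt n := by
      have := RadBV.sum_abs_walk_le (n := n)
      push_cast at this ⊢
      exact this
    have hB : ∑ ω : Fin n → Bool, ((RadBV.B ω : ℤ) : ℝ)
        ≤ 2 * ∑ ω : Fin n → Bool, ((|RadBV.walk ω n| : ℤ) : ℝ) := by
      have := RadBV.sum_B_le (n := n)
      have h2 : ((∑ ω : Fin n → Bool, RadBV.B ω : ℤ) : ℝ)
          ≤ ((2 * ∑ ω : Fin n → Bool, |RadBV.walk ω n| : ℤ) : ℝ) := by exact_mod_cast this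
      push_cast at h2
      simpa [Int.cast_abs] using h2
    have hBfin : ∑ ω : Fin n → Bool, ((RadBV.B ω : ℤ) : ℝ) ≤ 2 * (2^n * Real.sqrt n) := by
      refine le_trans hB ?_
      linarith
    calc ((2:ℝ)^n)⁻¹ * ((n:ℝ)⁻¹ * ((∑ ω : Fin n → Bool, ((|RadBV.walk ω n| : ℤ) : ℝ))
          + M * ∑ ω : Fin n → Bool, ((RadBV.B ω : ℤ) : ℝ)))
        ≤ ((2:ℝ)^n)⁻¹ * ((n:ℝ)⁻¹ * ((2^n * Real.sqrt n) + M * (2 * (2^n * Real.sqrt n)))) := by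
          apply mul_le_mul_of_nonneg_left _ (by positivity)
          apply mul_le_mul_of_nonneg_left _ (by positivity)
          exact add_le_add hA (mul_le_mul_of_nonneg_left hBfin (le_of_lt hM))
      _ = (2 * M + 1) / Real.sqrt n := by
          rw [eq_div_iff (ne_of_gt hsn)]
          field_simp
          linear_combination (2*M + 1) * hns
end

section
/- Let (x₁,y₁),…,(xₙ,yₙ) be data with x₁ ≤ … ≤ xₙ and y_i ∈ ℝ, and let μ̂ ∈ ℝⁿ be the isotonic regression fit, i.e., the minimizer of Σ_{i=1}^n (y_i − v_i)² over all vectors v ∈ ℝⁿ with v₁ ≤ v₂ ≤ … ≤ vₙ. Then for any set A ⊆ ℝ: (1/n)·Σ_{i=1}^n μ̂_i·1{μ̂_i ∈ A} = (1/n)·Σ_{i=1}^n y_i·1{μ̂_i ∈ A}. -/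
open Set

lemma isotonic_aux (n : ℕ) (y μhat : Fin n → ℝ)
    (hmono : Monotone μhat)
    (hmin : ∀ v : Fin n → ℝ, Monotone v →
      (∑ i, (y i - μhat i)^2) ≤ ∑ i, (y i - v i)^2)
    (g : ℝ → ℝ) (hg : ∀ t, |g t| ≤ 1) :
    ∑ i, (y i - μhat i) * g (μhat i) ≤ 0 := by
  by_contra hcon
  push_neg at hcon
  set S : ℝ := ∑ i, (y i - μhat i) * g (μhat i) with hS
  set Q : ℝ := ∑ i, (g (μhat i))^2 with hQ
  have hQ0 : 0 ≤ Q := Finset.sum_nonneg fun i _ => sq_nonneg _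
  classical
  set T : Finset (Fin n × Fin n) :=
    Finset.univ.filter (fun p => μhat p.1 < μhat p.2) with hT
  set δ : ℝ := if h : T.Nonempty then T.inf' h (fun p => μhat p.2 - μhat p.1) else 1 with hδ
  have hδpos : 0 < δ := by
    rw [hδ]
    split_ifs with h
    · rw [Finset.lt_inf'_iff]
      intro p hp
      have : μhat p.1 < μhat p.2 := (Finset.mem_filter.mp hp).2
      linarith
    · norm_num
  have hgap : ∀ i j : Fin n, μhat i < μhat j → δ ≤ μhat j - μhat i := by
    intro i j hij
    have hmem : (i, j) ∈ T := by
      simp [hT, hij]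
    have hne : T.Nonempty := ⟨_, hmem⟩
    rw [hδ, dif_pos hne]
    exact Finset.inf'_le _ hmem
  set ε : ℝ := min (δ/2) (S/(Q+1)) with hε
  have hεpos : 0 < ε := by
    apply lt_min (by linarith)
    positivity
  have hεδ : ε ≤ δ/2 := min_le_left _ _
  have hεS : ε * (Q + 1) ≤ S := by
    have h1 : ε ≤ S/(Q+1) := min_le_right _ _
    have h2 : (0:ℝ) < Q + 1 := by linarith
    calc ε * (Q+1) ≤ (S/(Q+1)) * (Q+1) := by nlinarith
    _ = S := by field_simp
  set v : Fin n → ℝ := fun i => μhat i + ε * g (μhat i) with hv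
  have hvmono : Monotone v := by
    intro i j hij
    have hle := hmono hij
    rcases eq_or_lt_of_le hle with heq | hlt
    · simp [hv, heq]
    · have hgapij := hgap i j hlt
      have h1 := abs_le.mp (hg (μhat i))
      have h2 := abs_le.mp (hg (μhat j))
      simp only [hv]
      nlinarith
  have hexp : ∑ i, (y i - v i)^2
      = (∑ i, (y i - μhat i)^2) - 2*ε*S + ε^2*Q := by
    rw [hS, hQ, Finset.mul_sum, Finset.mul_sum, ← Finset.sum_sub_distrib,
      ← Finset.sum_add_distrib]
    apply Finset.sum_congr rfl
    intro i _
    simp only [hv]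
    ring
  have hopt := hmin v hvmono
  rw [hexp] at hopt
  nlinarith [mul_pos hεpos hcon, sq_nonneg ε, mul_pos hεpos hεpos]

/-- Isotonic regression is a piecewise empirical mean: if `μ̂` is the isotonic regression
fit of `y₁,…,yₙ` (the minimizer of `Σᵢ (yᵢ − vᵢ)²` over non-decreasing vectors `v`), then
for any set `A ⊆ ℝ`,
`(1/n)·Σᵢ μ̂ᵢ·1{μ̂ᵢ ∈ A} = (1/n)·Σᵢ yᵢ·1{μ̂ᵢ ∈ A}`. -/
theorem isotonic_piecewise_mean (n : ℕ) (y μhat : Fin n → ℝ)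
    (hmono : Monotone μhat)
    (hmin : ∀ v : Fin n → ℝ, Monotone v →
      (∑ i, (y i - μhat i)^2) ≤ ∑ i, (y i - v i)^2)
    (A : Set ℝ) :
    (n : ℝ)⁻¹ * ∑ i, μhat i * A.indicator (1 : ℝ → ℝ) (μhat i)
      = (n : ℝ)⁻¹ * ∑ i, y i * A.indicator (1 : ℝ → ℝ) (μhat i) := by
  classical
  set g : ℝ → ℝ := A.indicator (1 : ℝ → ℝ) with hgdef
  have hg : ∀ t, |g t| ≤ 1 := by
    intro t
    by_cases ht : t ∈ A
    · simp [hgdef, Set.indicator_of_mem ht]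
    · simp [hgdef, Set.indicator_of_notMem ht]
  have hg' : ∀ t, |(fun s => -(g s)) t| ≤ 1 := by
    intro t; simpa using hg t
  have h1 := isotonic_aux n y μhat hmono hmin g hg
  have h2 := isotonic_aux n y μhat hmono hmin (fun s => -(g s)) hg'
  have h2' : -∑ i, (y i - μhat i) * g (μhat i) ≤ 0 := by
    rw [← Finset.sum_neg_distrib]
    convert h2 using 2 with i
    ring
  have hzero : ∑ i, (y i - μhat i) * g (μhat i) = 0 := le_antisymm h1 (by linarith)
  have hsplit : ∑ i, (y i - μhat i) * g (μhat i)
      = (∑ i, y i * g (μhat i)) - ∑ i, μhat i * g (μhat i) := by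
    rw [← Finset.sum_sub_distrib]
    apply Finset.sum_congr rfl
    intro i _
    ring
  rw [hsplit] at hzero
  have : ∑ i, μhat i * g (μhat i) = ∑ i, y i * g (μhat i) := by linarith
  rw [hgdef] at this
  rw [this]
end
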